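/- arXiv:1310.7834 — 2 statements merged into one kernel-verified Lean document; each statement's English description precedes it below -/
import Mathlib

section
/- Every extreme point z of the polytope ℛ' is integral, i.e., z_i ∈ ℤ (hence z_i ∈ {0,1}) for every i ∈ 𝓕'. -/
set_option linter.unusedSectionVars false
set_option maxHeartbeats 1000000

open scoped Classical
open Finset

/-- The rank function of a matroid: the maximum cardinality of an independent
subset of the given set. -/
noncomputable def matroidRank {α : Type*} (M : Matroid α) (S : Finset α) : ℕ :=
  (S.powerset.filter (fun I : Finset α => M.Indep ↑I)).sup Finset.card

section Aux
open scoped Classical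


variable {α : Type*} {M : Matroid α}

lemma matroidRank_le_card (S : Finset α) : matroidRank M S ≤ S.card := by
  apply Finset.sup_le
  intro I hI
  simp only [mem_filter, mem_powerset] at hI
  exact Finset.card_le_card hI.1

lemma le_matroidRank_of_indep {S I : Finset α} (hIS : I ⊆ S) (hI : M.Indep ↑I) :
    I.card ≤ matroidRank M S :=
  Finset.le_sup (by simp [mem_filter, mem_powerset, hIS, hI])

lemma matroidRank_eq_ncard_basis {S : Finset α} {I : Set α} (hI : M.IsBasis I ↑S) :
    matroidRank M S = I.ncard := by
  have hIfin : I.Finite := (S.finite_toSet.subset hI.subset)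
  apply le_antisymm
  · apply Finset.sup_le
    intro J hJ
    simp only [mem_filter, mem_powerset] at hJ
    obtain ⟨K, hK, hJK⟩ := hJ.2.subset_isBasis_of_subset (by exact_mod_cast hJ.1)
      (hI.subset_ground)
    have hKI : K.encard = I.encard := hK.encard_eq_encard hI
    have hle : (J : Set α).encard ≤ I.encard := le_trans (Set.encard_le_encard hJK) hKI.le
    have hc : (J : Set α).ncard ≤ I.ncard := by
      rw [Set.ncard_def, Set.ncard_def]
      exact ENat.toNat_le_toNat hle hIfin.encard_lt_top.ne
    simpa using hc
  · have h2 := le_matroidRank_of_indep (M := M) (S := S) (I := hIfin.toFinset)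
      (by simpa [Set.Finite.subset_toFinset] using hI.subset) (by simpa using hI.indep)
    rwa [Set.ncard_eq_toFinset_card I hIfin]

lemma matroidRank_submod [DecidableEq α] (hE : M.E = Set.univ) (A B : Finset α) :
    matroidRank M (A ∪ B) + matroidRank M (A ∩ B) ≤ matroidRank M A + matroidRank M B := by
  classical
  obtain ⟨I, hI⟩ := M.exists_isBasis ↑(A ∩ B) (by rw [hE]; exact Set.subset_univ _)
  have hsub : (I : Set α) ⊆ ↑(A ∪ B) := hI.subset.trans (by
    intro x hx
    simp only [Finset.coe_inter, Set.mem_inter_iff] at hx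
    simp only [Finset.coe_union, Set.mem_union]
    exact Or.inl hx.1)
  obtain ⟨J, hJ, hIJ⟩ := hI.indep.subset_isBasis_of_subset (X := ↑(A ∪ B)) hsub
    (by rw [hE]; exact Set.subset_univ _)
  have hIfin : I.Finite := (A ∩ B : Finset α).finite_toSet.subset hI.subset
  have hJfin : J.Finite := (A ∪ B : Finset α).finite_toSet.subset hJ.subset
  set If := hIfin.toFinset with hIf
  set Jf := hJfin.toFinset with hJf
  have hrU : matroidRank M (A ∪ B) = Jf.card := by
    rw [matroidRank_eq_ncard_basis hJ, Set.ncard_eq_toFinset_card J hJfin]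
  have hrI : matroidRank M (A ∩ B) = If.card := by
    rw [matroidRank_eq_ncard_basis hI, Set.ncard_eq_toFinset_card I hIfin]
  have hJA : (Jf ∩ A).card ≤ matroidRank M A := by
    refine le_matroidRank_of_indep (Finset.inter_subset_right) (hJ.indep.subset ?_)
    intro x hx
    simp only [Finset.coe_inter, Set.mem_inter_iff, hJf, Set.Finite.coe_toFinset] at hx ⊢
    exact hx.1
  have hJB : (Jf ∩ B).card ≤ matroidRank M B := by
    refine le_matroidRank_of_indep (Finset.inter_subset_right) (hJ.indep.subset ?_)
    intro x hx
    simp only [Finset.coe_inter, Set.mem_inter_iff, hJf, Set.Finite.coe_toFinset] at hx ⊢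
    exact hx.1
  have hunion : (Jf ∩ A) ∪ (Jf ∩ B) = Jf := by
    rw [← Finset.inter_union_distrib_left]
    apply Finset.inter_eq_left.2
    intro x hx
    have := hJ.subset (by simpa [hJf] using hx)
    exact_mod_cast this
  have hinter : (Jf ∩ A) ∩ (Jf ∩ B) ⊇ If := by
    intro x hx
    have hxI : x ∈ I := by simpa [hIf] using hx
    have hxJ : x ∈ Jf := by simp [hJf, Set.Finite.mem_toFinset]; exact hIJ hxI
    have hxAB : x ∈ A ∩ B := by exact_mod_cast hI.subset hxI
    simp only [Finset.mem_inter] at hxAB ⊢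
    exact ⟨⟨hxJ, hxAB.1⟩, hxJ, hxAB.2⟩
  have key : Jf.card + If.card ≤ (Jf ∩ A).card + (Jf ∩ B).card := by
    have h1 := Finset.card_union_add_card_inter (Jf ∩ A) (Jf ∩ B)
    have h2 : ((Jf ∩ A) ∪ (Jf ∩ B)).card = Jf.card := by rw [hunion]
    have h3 : If.card ≤ ((Jf ∩ A) ∩ (Jf ∩ B)).card := Finset.card_le_card hinter
    omega
  omega

lemma matroidRank_empty : matroidRank M (∅ : Finset α) = 0 :=
  Nat.le_antisymm (by simpa using matroidRank_le_card (M := M) ∅) (Nat.zero_le _)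

lemma exists_chain_control {γ : Type*} [DecidableEq γ] :
    ∀ (n : ℕ) (T : Finset (Finset γ)), (∅ ∈ T) →
    (∀ A ∈ T, ∀ B ∈ T, A ∪ B ∈ T) → (∀ A ∈ T, ∀ B ∈ T, A ∩ B ∈ T) →
    (∀ A ∈ T, A.card ≤ n) →
    ∃ C : Finset (Finset γ), C ⊆ T ∧ (∀ A ∈ C, ∀ B ∈ C, A ⊆ B ∨ B ⊆ A) ∧
      ∀ d : γ → ℝ, (∀ A ∈ C, ∑ i ∈ A, d i = 0) → ∀ B ∈ T, ∑ i ∈ B, d i = 0 := by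
  intro n
  induction n with
  | zero =>
    intro T hE0 _ _ hcard
    refine ⟨{∅}, by simpa using hE0, by simp, ?_⟩
    intro d _ B hB
    have : B = ∅ := Finset.card_eq_zero.1 (Nat.le_zero.1 (hcard B hB))
    simp [this]
  | succ n ih =>
    intro T hE0 hU hI hcard
    obtain ⟨m, hm, hmax⟩ : ∃ m ∈ T, ∀ x ∈ T, ¬ m < x := by
      obtain ⟨m, hm⟩ := Finset.exists_maximal (s := T) ⟨∅, hE0⟩
      exact ⟨m, hm.1, fun x hx hlt => hlt.not_ge (hm.2 hx hlt.le)⟩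
    have hsub : ∀ A ∈ T, A ⊆ m := by
      intro A hA
      by_contra hAm
      have h1 : A ∪ m ∈ T := hU A hA m hm
      have h2 : m < A ∪ m :=
        lt_of_le_of_ne Finset.subset_union_right
          (fun he => hAm (by rw [he]; exact Finset.subset_union_left))
      exact hmax _ h1 h2
    by_cases hme : m = ∅
    · refine ⟨{∅}, by simpa using hE0, by simp, ?_⟩
      intro d _ B hB
      have : B = ∅ := Finset.subset_empty.1 (hme ▸ hsub B hB)
      simp [this]
    · have hPne : ∅ ∈ T.filter (· ≠ m) :=
        Finset.mem_filter.2 ⟨hE0, fun h => hme h.symm⟩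
      obtain ⟨A', hA', hAmax⟩ := Finset.exists_max_image (T.filter (· ≠ m)) Finset.card ⟨∅, hPne⟩
      simp only [mem_filter] at hA'
      have hA'le : A' ⊆ m := hsub A' hA'.1
      have hA'card : A'.card < m.card :=
        Finset.card_lt_card (Finset.ssubset_iff_subset_ne.2 ⟨hA'le, hA'.2⟩)
      have hT' : ∀ A ∈ T.filter (· ⊆ A'), A.card ≤ n := by
        intro A hA
        simp only [mem_filter] at hA
        have h1 := Finset.card_le_card hA.2
        have h2 := hcard m hm
        omega
      obtain ⟨C', hC'T, hC'chain, hC'ctrl⟩ := ih (T.filter (· ⊆ A'))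
        (by simp [hE0]) (by
          intro A hA B hB
          simp only [mem_filter] at *
          exact ⟨hU A hA.1 B hB.1, Finset.union_subset hA.2 hB.2⟩) (by
          intro A hA B hB
          simp only [mem_filter] at *
          exact ⟨hI A hA.1 B hB.1, Finset.inter_subset_left.trans hA.2⟩) hT'
      refine ⟨insert m C', ?_, ?_, ?_⟩
      · intro A hA
        rcases Finset.mem_insert.1 hA with h | hA
        · rw [h]; exact hm
        · exact (Finset.mem_filter.1 (hC'T hA)).1
      · intro A hA B hB
        rcases Finset.mem_insert.1 hA with h1 | h1 <;> rcases Finset.mem_insert.1 hB with h2 | h2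
        · rw [h1, h2]; exact Or.inl (Finset.Subset.refl _)
        · rw [h1]; exact Or.inr ((Finset.mem_filter.1 (hC'T h2)).2.trans hA'le)
        · rw [h2]; exact Or.inl ((Finset.mem_filter.1 (hC'T h1)).2.trans hA'le)
        · exact hC'chain A h1 B h2
      · intro d hd B hB
        have hdm : ∑ i ∈ m, d i = 0 := hd m (Finset.mem_insert_self _ _)
        have hd' : ∀ A ∈ C', ∑ i ∈ A, d i = 0 := fun A hA => hd A (Finset.mem_insert_of_mem hA)
        have hctrl := hC'ctrl d hd'
        have hA'sum : ∑ i ∈ A', d i = 0 :=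
          hctrl A' (Finset.mem_filter.2 ⟨hA'.1, Finset.Subset.refl _⟩)
        by_cases hBA : B ⊆ A'
        · exact hctrl B (Finset.mem_filter.2 ⟨hB, hBA⟩)
        · have hBm : B ∪ A' = m := by
            by_contra hne
            have h1 : B ∪ A' ∈ T.filter (· ≠ m) := Finset.mem_filter.2 ⟨hU B hB A' hA'.1, hne⟩
            have h2 := hAmax _ h1
            have h3 : A' ⊂ B ∪ A' := Finset.ssubset_iff_subset_ne.2
              ⟨Finset.subset_union_right,
               fun he => hBA (by rw [he]; exact Finset.subset_union_left)⟩
            exact absurd (Finset.card_lt_card h3) (not_lt.2 h2)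
          have hsplit : ∑ i ∈ B ∩ A', d i + ∑ i ∈ B \ A', d i = ∑ i ∈ B, d i :=
            Finset.sum_inter_add_sum_sdiff B A' d
          have h1 : ∑ i ∈ B ∩ A', d i = 0 :=
            hctrl _ (Finset.mem_filter.2 ⟨hI B hB A' hA'.1, Finset.inter_subset_right⟩)
          have hBdiff : B \ A' = m \ A' := by
            ext x
            simp only [Finset.mem_sdiff]
            constructor
            · rintro ⟨hxB, hxA⟩
              exact ⟨hBm ▸ Finset.mem_union_left _ hxB, hxA⟩
            · rintro ⟨hxm, hxA⟩
              have hx : x ∈ B ∪ A' := hBm ▸ hxm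
              rcases Finset.mem_union.1 hx with h | h
              · exact ⟨h, hxA⟩
              · exact absurd h hxA
          have h2 : ∑ i ∈ B \ A', d i = 0 := by
            rw [hBdiff]
            have h4 := Finset.sum_sdiff (f := d) hA'le
            rw [hA'sum, hdm] at h4
            linarith
          linarith

variable {γ : Type*} [DecidableEq γ]

/-- private part of `A` wrt family `L`: elements of `A` in no proper `L`-subset of `A`. -/
noncomputable def lamPriv (L : Finset (Finset γ)) (A : Finset γ) : Finset γ :=
  A \ (L.filter (· ⊂ A)).biUnion id

noncomputable def lamMax (L : Finset (Finset γ)) (A : Finset γ) : Finset (Finset γ) :=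
  (L.filter (· ⊂ A)).filter (fun B => ∀ C ∈ L, C ⊂ A → ¬ B ⊂ C)

lemma lamPriv_subset (L : Finset (Finset γ)) (A : Finset γ) : lamPriv L A ⊆ A :=
  Finset.sdiff_subset

lemma lamMax_mem {L : Finset (Finset γ)} {A B : Finset γ} (h : B ∈ lamMax L A) :
    B ∈ L ∧ B ⊂ A := by
  simp only [lamMax, mem_filter] at h
  exact ⟨h.1.1, h.1.2⟩

lemma lamMax_pairwise_disj (L : Finset (Finset γ))
    (hlam : ∀ A ∈ L, ∀ B ∈ L, A ⊆ B ∨ B ⊆ A ∨ Disjoint A B) (A : Finset γ) :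
    ∀ B ∈ lamMax L A, ∀ B' ∈ lamMax L A, B ≠ B' → Disjoint B B' := by
  intro B hB B' hB' hne
  simp only [lamMax, mem_filter] at hB hB'
  rcases hlam B hB.1.1 B' hB'.1.1 with h | h | h
  · exact absurd (Finset.ssubset_iff_subset_ne.2 ⟨h, hne⟩)
      (hB.2 B' hB'.1.1 hB'.1.2)
  · exact absurd (Finset.ssubset_iff_subset_ne.2 ⟨h, hne.symm⟩)
      (hB'.2 B hB.1.1 hB.1.2)
  · exact h

lemma lam_biUnion_eq (L : Finset (Finset γ)) (A : Finset γ) :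
    (L.filter (· ⊂ A)).biUnion id = (lamMax L A).biUnion id := by
  apply Finset.Subset.antisymm
  · intro x hx
    rw [Finset.mem_biUnion] at hx
    obtain ⟨B, hB, hxB⟩ := hx
    simp only [mem_filter] at hB
    obtain ⟨m, hmmem, hmmax⟩ : ∃ m ∈ (L.filter (· ⊂ A)).filter (fun C => B ⊆ C),
        ∀ x ∈ (L.filter (· ⊂ A)).filter (fun C => B ⊆ C), ¬ m < x := by
      obtain ⟨m, hm⟩ := Finset.exists_maximal
        (s := (L.filter (· ⊂ A)).filter (fun C => B ⊆ C)) ⟨B, by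
        simp only [mem_filter]
        exact ⟨⟨hB.1, hB.2⟩, Finset.Subset.refl _⟩⟩
      exact ⟨m, hm.1, fun x hx hlt => hlt.not_ge (hm.2 hx hlt.le)⟩
    simp only [mem_filter] at hmmem
    rw [Finset.mem_biUnion]
    refine ⟨m, ?_, hmmem.2 hxB⟩
    simp only [lamMax, mem_filter]
    refine ⟨⟨hmmem.1.1, hmmem.1.2⟩, ?_⟩
    intro C hC hCA hmC
    exact hmmax C (by
      simp only [mem_filter]
      exact ⟨⟨hC, hCA⟩, hmmem.2.trans (subset_of_ssubset hmC)⟩) (Finset.lt_iff_ssubset.2 hmC)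
  · apply Finset.biUnion_subset_biUnion_of_subset_left
    intro B hB
    simp only [lamMax, mem_filter] at hB
    simp only [mem_filter]
    exact hB.1

lemma lam_decomp (L : Finset (Finset γ))
    (hlam : ∀ A ∈ L, ∀ B ∈ L, A ⊆ B ∨ B ⊆ A ∨ Disjoint A B) (A : Finset γ) (f : γ → ℝ) :
    ∑ i ∈ A, f i = ∑ i ∈ lamPriv L A, f i + ∑ B ∈ lamMax L A, ∑ i ∈ B, f i := by
  have hU : (L.filter (· ⊂ A)).biUnion id ⊆ A := by
    intro x hx
    rw [Finset.mem_biUnion] at hx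
    obtain ⟨B, hB, hxB⟩ := hx
    exact (subset_of_ssubset (Finset.mem_filter.1 hB).2) hxB
  have h1 : ∑ i ∈ A \ (L.filter (· ⊂ A)).biUnion id, f i
      + ∑ i ∈ (L.filter (· ⊂ A)).biUnion id, f i = ∑ i ∈ A, f i :=
    Finset.sum_sdiff hU
  have h2 : ∑ i ∈ (L.filter (· ⊂ A)).biUnion id, f i = ∑ B ∈ lamMax L A, ∑ i ∈ B, f i := by
    rw [lam_biUnion_eq]
    apply Finset.sum_biUnion
    intro B hB B' hB' hne
    exact lamMax_pairwise_disj L hlam A B hB B' hB' hne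
  rw [← h1, h2, lamPriv]

lemma lam_zero (L : Finset (Finset γ))
    (hlam : ∀ A ∈ L, ∀ B ∈ L, A ⊆ B ∨ B ⊆ A ∨ Disjoint A B) (d : γ → ℝ)
    (h0 : ∀ A ∈ L, ∑ i ∈ lamPriv L A, d i = 0) :
    ∀ A ∈ L, ∑ i ∈ A, d i = 0 := by
  have key : ∀ n (A : Finset γ), A.card = n → A ∈ L → ∑ i ∈ A, d i = 0 := by
    intro n
    induction n using Nat.strong_induction_on with
    | _ n ih =>
      intro A hcard hA
      rw [lam_decomp L hlam A d, h0 A hA]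
      have hz : ∀ B ∈ lamMax L A, ∑ i ∈ B, d i = 0 := by
        intro B hB
        obtain ⟨hBL, hBA⟩ := lamMax_mem hB
        exact ih B.card (hcard ▸ Finset.card_lt_card hBA) B rfl hBL
      rw [Finset.sum_congr rfl hz]
      simp
  exact fun A hA => key A.card A rfl hA

lemma lam_priv_int (L : Finset (Finset γ))
    (hlam : ∀ A ∈ L, ∀ B ∈ L, A ⊆ B ∨ B ⊆ A ∨ Disjoint A B) (z : γ → ℝ)
    (hint : ∀ A ∈ L, ∃ n : ℤ, ∑ i ∈ A, z i = n) :
    ∀ A ∈ L, ∃ n : ℤ, ∑ i ∈ lamPriv L A, z i = n := by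
  intro A hA
  obtain ⟨n, hn⟩ := hint A hA
  have hd := lam_decomp L hlam A z
  have : ∀ B ∈ lamMax L A, ∃ k : ℤ, ∑ i ∈ B, z i = k := fun B hB =>
    hint B (lamMax_mem hB).1
  choose g hg using this
  refine ⟨n - (∑ B ∈ (lamMax L A).attach, g B.1 B.2), ?_⟩
  push_cast
  rw [← Finset.sum_attach (lamMax L A) (fun B => ∑ i ∈ B, z i)] at hd
  rw [Finset.sum_congr rfl (fun (B : {x // x ∈ lamMax L A}) _ => hg B.1 B.2)] at hd
  rw [hn] at hd
  linarith

lemma lamPriv_pairwise_disj (L : Finset (Finset γ))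
    (hlam : ∀ A ∈ L, ∀ B ∈ L, A ⊆ B ∨ B ⊆ A ∨ Disjoint A B) :
    ∀ A ∈ L, ∀ B ∈ L, A ≠ B → Disjoint (lamPriv L A) (lamPriv L B) := by
  intro A hA B hB hne
  have key : ∀ X Y : Finset γ, X ∈ L → Y ∈ L → X ⊂ Y → Disjoint X (lamPriv L Y) := by
    intro X Y hX _ hXY
    rw [Finset.disjoint_right]
    intro x hx hxX
    simp only [lamPriv, Finset.mem_sdiff, Finset.mem_biUnion] at hx
    exact hx.2 ⟨X, Finset.mem_filter.2 ⟨hX, hXY⟩, hxX⟩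
  rcases hlam A hA B hB with h | h | h
  · exact Finset.disjoint_of_subset_left (lamPriv_subset L A)
      (key A B hA hB (Finset.ssubset_iff_subset_ne.2 ⟨h, hne⟩))
  · exact (Finset.disjoint_of_subset_left (lamPriv_subset L B)
      (key B A hB hA (Finset.ssubset_iff_subset_ne.2 ⟨h, hne.symm⟩))).symm
  · exact h.mono (lamPriv_subset L A) (lamPriv_subset L B)

variable {γ : Type*} [Fintype γ] [DecidableEq γ]

noncomputable def indVec (Fr : Finset γ) (b : Finset γ) : EuclideanSpace ℝ ↥Fr :=
  WithLp.toLp 2 (fun j => if (j : γ) ∈ b then (1 : ℝ) else 0)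

lemma indVec_inj {Fr b b' : Finset γ} (hb : b ⊆ Fr) (hb' : b' ⊆ Fr)
    (h : indVec Fr b = indVec Fr b') : b = b' := by
  ext x
  constructor
  · intro hx
    have hj := congrArg (fun v : EuclideanSpace ℝ ↥Fr => v ⟨x, hb hx⟩) h
    simp only [indVec, PiLp.toLp_apply, if_pos hx] at hj
    by_contra hx'
    rw [if_neg hx'] at hj
    norm_num at hj
  · intro hx
    have hj := congrArg (fun v : EuclideanSpace ℝ ↥Fr => v ⟨x, hb' hx⟩) h
    simp only [indVec, PiLp.toLp_apply, if_pos hx] at hj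
    by_contra hx'
    rw [if_neg hx'] at hj
    norm_num at hj

lemma sum_indVec_partition {Fr : Finset γ} {P : Finset (Finset γ)}
    (hPdisj : ∀ b ∈ P, ∀ b' ∈ P, b ≠ b' → Disjoint b b')
    (hcover : P.biUnion (fun b => b) = Fr) :
    ∑ b ∈ P, indVec Fr b = indVec Fr Fr := by
  ext j
  have hj : (j : γ) ∈ P.biUnion (fun b => b) := by rw [hcover]; exact j.2
  rw [Finset.mem_biUnion] at hj
  obtain ⟨b0, hb0, hjb0⟩ := hj
  have happ : (∑ b ∈ P, indVec Fr b) j = ∑ b ∈ P, indVec Fr b j :=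
    by rw [WithLp.ofLp_sum]; exact Finset.sum_apply _ _ _
  rw [happ]
  have hcg : ∀ b ∈ P, indVec Fr b j = if b = b0 then 1 else 0 := by
    intro b hb
    by_cases hbb : b = b0
    · simp [indVec, hbb, hjb0]
    · have hdisj := hPdisj b hb b0 hb0 hbb
      have hnj : (j : γ) ∉ b := fun hjb => (Finset.disjoint_left.1 hdisj) hjb hjb0
      simp [indVec, hnj, hbb]
  rw [Finset.sum_congr rfl hcg, Finset.sum_ite_eq' P b0 (fun _ => (1:ℝ))]
  simp [indVec, hb0, j.2]

lemma exists_perp (Fr : Finset γ) (hFr : Fr.Nonempty) (P Q : Finset (Finset γ))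
    (hPsub : ∀ b ∈ P, b ⊆ Fr) (hPcard : ∀ b ∈ P, 2 ≤ b.card)
    (hPdisj : ∀ b ∈ P, ∀ b' ∈ P, b ≠ b' → Disjoint b b')
    (hQsub : ∀ b ∈ Q, b ⊆ Fr) (hQcard : ∀ b ∈ Q, 2 ≤ b.card)
    (hQdisj : ∀ b ∈ Q, ∀ b' ∈ Q, b ≠ b' → Disjoint b b') :
    ∃ d : γ → ℝ, d ≠ 0 ∧ (∀ i, i ∉ Fr → d i = 0) ∧
      (∀ b ∈ P, ∑ i ∈ b, d i = 0) ∧ (∀ b ∈ Q, ∑ i ∈ b, d i = 0) := by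
  classical
  set V : Finset (EuclideanSpace ℝ ↥Fr) := (P ∪ Q).image (indVec Fr) with hV
  set K : Submodule ℝ (EuclideanSpace ℝ ↥Fr) := Submodule.span ℝ (V : Set (EuclideanSpace ℝ ↥Fr)) with hKdef
  have hfr : Module.finrank ℝ (EuclideanSpace ℝ ↥Fr) = Fr.card := by
    rw [finrank_euclideanSpace, Fintype.card_coe]
  have main : K ≠ ⊤ := by
    intro hK
    have hrank : Fr.card ≤ V.card := by
      have h1 : Module.finrank ℝ K ≤ V.card := finrank_span_finset_le_card V
      rw [hK, finrank_top, hfr] at h1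
      exact h1
    have hVle : V.card ≤ P.card + Q.card :=
      le_trans (Finset.card_image_le) (Finset.card_union_le _ _)
    have hcount : ∀ (W : Finset (Finset γ)), (∀ b ∈ W, b ⊆ Fr) → (∀ b ∈ W, 2 ≤ b.card) →
        (∀ b ∈ W, ∀ b' ∈ W, b ≠ b' → Disjoint b b') →
        2 * W.card ≤ (W.biUnion (fun b => b)).card ∧ (W.biUnion (fun b => b)) ⊆ Fr := by
      intro W hsub hcard hdisj
      constructor
      · rw [Finset.card_biUnion (fun b hb b' hb' hne => hdisj b hb b' hb' hne)]
        calc 2 * W.card = ∑ _b ∈ W, 2 := by rw [Finset.sum_const]; ring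
        _ ≤ ∑ b ∈ W, b.card := Finset.sum_le_sum (fun b hb => hcard b hb)
      · intro x hx
        rw [Finset.mem_biUnion] at hx
        obtain ⟨b, hb, hxb⟩ := hx
        exact hsub b hb hxb
    obtain ⟨hP2, hPcov⟩ := hcount P hPsub hPcard hPdisj
    obtain ⟨hQ2, hQcov⟩ := hcount Q hQsub hQcard hQdisj
    have hPle : 2 * P.card ≤ Fr.card := le_trans hP2 (Finset.card_le_card hPcov)
    have hQle : 2 * Q.card ≤ Fr.card := le_trans hQ2 (Finset.card_le_card hQcov)
    have hPcover : P.biUnion (fun b => b) = Fr :=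
      Finset.eq_of_subset_of_card_le hPcov (by omega)
    have hQcover : Q.biUnion (fun b => b) = Fr :=
      Finset.eq_of_subset_of_card_le hQcov (by omega)
    have hPsum := sum_indVec_partition hPdisj hPcover
    have hQsum := sum_indVec_partition hQdisj hQcover
    have hFr1 : 1 ≤ Fr.card := Finset.card_pos.2 hFr
    by_cases hPQ : P = Q
    · have hVP : V ⊆ P.image (indVec Fr) := by
        rw [hV, hPQ, Finset.union_self]
      have hc : V.card ≤ P.card := le_trans (Finset.card_le_card hVP) Finset.card_image_le
      omega
    · have haux : ∀ (P' Q' : Finset (Finset γ)) (q0 : Finset γ), q0 ∈ Q' → q0 ∉ P' →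
          (∀ b ∈ P', b ⊆ Fr) → (∀ b ∈ Q', b ⊆ Fr) →
          V = (P' ∪ Q').image (indVec Fr) →
          ∑ b ∈ P', indVec Fr b = indVec Fr Fr →
          ∑ b ∈ Q', indVec Fr b = indVec Fr Fr →
          P'.card + Q'.card = Fr.card → False := by
        intro P' Q' q0 hq0Q hq0P hP'sub hQ'sub hVeq hP'sum hQ'sum hcardeq
        have hq0V : indVec Fr q0 ∈ V := by
          rw [hVeq]
          exact Finset.mem_image_of_mem _ (Finset.mem_union_right _ hq0Q)
        have hspan : indVec Fr q0 ∈ Submodule.span ℝ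
            ((V.erase (indVec Fr q0) : Finset (EuclideanSpace ℝ ↥Fr)) : Set (EuclideanSpace ℝ ↥Fr)) := by
          have hkey : indVec Fr q0 = (∑ b ∈ P', indVec Fr b) - ∑ b ∈ Q'.erase q0, indVec Fr b := by
            rw [hP'sum, ← hQ'sum, ← Finset.add_sum_erase Q' _ hq0Q]
            abel
          have hmem2 : (∑ b ∈ P', indVec Fr b) - ∑ b ∈ Q'.erase q0, indVec Fr b ∈
              Submodule.span ℝ ((V.erase (indVec Fr q0) :
                Finset (EuclideanSpace ℝ ↥Fr)) : Set (EuclideanSpace ℝ ↥Fr)) := by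
            apply Submodule.sub_mem
            · apply Submodule.sum_mem
              intro b hb
              apply Submodule.subset_span
              simp only [Finset.coe_erase, Set.mem_diff, Set.mem_singleton_iff]
              constructor
              · rw [hVeq]
                exact Finset.mem_coe.2 (Finset.mem_image_of_mem _ (Finset.mem_union_left _ hb))
              · intro he
                exact hq0P (indVec_inj (hP'sub b hb) (hQ'sub q0 hq0Q) he ▸ hb)
            · apply Submodule.sum_mem
              intro b hb
              apply Submodule.subset_span
              simp only [Finset.coe_erase, Set.mem_diff, Set.mem_singleton_iff]
              have hbQ := Finset.mem_of_mem_erase hb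
              constructor
              · rw [hVeq]
                exact Finset.mem_coe.2 (Finset.mem_image_of_mem _ (Finset.mem_union_right _ hbQ))
              · intro he
                exact (Finset.ne_of_mem_erase hb) (indVec_inj (hQ'sub b hbQ) (hQ'sub q0 hq0Q) he)
          rwa [← hkey] at hmem2
        have hle : K ≤ Submodule.span ℝ
            ((V.erase (indVec Fr q0) : Finset (EuclideanSpace ℝ ↥Fr)) : Set (EuclideanSpace ℝ ↥Fr)) := by
          rw [hKdef, Submodule.span_le]
          intro v hv
          rcases eq_or_ne v (indVec Fr q0) with rfl | hvne
          · exact hspan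
          · apply Submodule.subset_span
            simp only [Finset.coe_erase, Set.mem_diff, Set.mem_singleton_iff]
            exact ⟨hv, hvne⟩
        have hfin : Fr.card ≤ (V.erase (indVec Fr q0)).card := by
          have h1 : Module.finrank ℝ K ≤ (V.erase (indVec Fr q0)).card :=
            le_trans (Submodule.finrank_mono hle) (finrank_span_finset_le_card _)
          rw [hK, finrank_top, hfr] at h1
          exact h1
        rw [Finset.card_erase_of_mem hq0V] at hfin
        omega
      by_cases hQP : Q ⊆ P
      · have hex : ∃ p0 ∈ P, p0 ∉ Q := by
          by_contra hc
          push_neg at hc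
          exact hPQ (Finset.Subset.antisymm hc hQP)
        obtain ⟨p0, hp0P, hp0Q⟩ := hex
        exact haux Q P p0 hp0P hp0Q hQsub hPsub (by rw [hV, Finset.union_comm]) hQsum hPsum (by omega)
      · obtain ⟨q0, hq0Q, hq0P⟩ := Finset.not_subset.1 hQP
        exact haux P Q q0 hq0Q hq0P hPsub hQsub rfl hPsum hQsum (by omega)
  have hbot : Kᗮ ≠ ⊥ := fun hb => main (Submodule.orthogonal_eq_bot_iff.1 hb)
  obtain ⟨w, hwK, hw0⟩ := Submodule.exists_mem_ne_zero_of_ne_bot hbot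
  set d : γ → ℝ := fun i => if h : i ∈ Fr then w ⟨i, h⟩ else 0 with hd
  have hperp : ∀ b : Finset γ, b ⊆ Fr → b ∈ P ∪ Q → ∑ i ∈ b, d i = 0 := by
    intro b hbsub hbV
    have hmemK : indVec Fr b ∈ K := Submodule.subset_span
      (Finset.mem_coe.2 (Finset.mem_image_of_mem _ hbV))
    have hinner : (inner ℝ (indVec Fr b) w : ℝ) = 0 :=
      (Submodule.mem_orthogonal K w).1 hwK _ hmemK
    calc ∑ i ∈ b, d i = ∑ i ∈ Fr ∩ b, d i := by rw [Finset.inter_eq_right.2 hbsub]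
      _ = ∑ i ∈ Fr, (if i ∈ b then d i else 0) := (Finset.sum_ite_mem Fr b d).symm
      _ = ∑ j ∈ Fr.attach, (if (j : γ) ∈ b then d (j : γ) else 0) :=
          (Finset.sum_attach Fr _).symm
      _ = ∑ j : ↥Fr, (indVec Fr b j) * w j := by
          rw [Finset.univ_eq_attach]
          apply Finset.sum_congr rfl
          intro j _
          by_cases hj : (j : γ) ∈ b
          · simp only [indVec, PiLp.toLp_apply, if_pos hj, hd, dif_pos j.2, one_mul]
          · simp [indVec, hj]
      _ = (inner ℝ (indVec Fr b) w : ℝ) := by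
          rw [PiLp.inner_apply]
          apply Finset.sum_congr rfl
          intro j _
          rw [RCLike.inner_apply, conj_trivial, mul_comm]
      _ = 0 := hinner
  refine ⟨d, ?_, ?_, ?_, ?_⟩
  · intro hd0
    apply hw0
    ext j
    have h2 := congrFun hd0 (j : γ)
    simp only [hd, dif_pos j.2] at h2
    exact h2
  · intro i hi
    simp [hd, dif_neg hi]
  · exact fun b hb => hperp b (hPsub b hb) (Finset.mem_union_left _ hb)
  · exact fun b hb => hperp b (hQsub b hb) (Finset.mem_union_right _ hb)

lemma exists_eps {ι : Type*} [Fintype ι] (gap der : ι → ℝ)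
    (h : ∀ i, der i ≠ 0 → 0 < gap i) :
    ∃ ε : ℝ, 0 < ε ∧ ∀ i, der i ≠ 0 → ε * |der i| ≤ gap i := by
  classical
  by_cases hall : ∀ i, der i = 0
  · exact ⟨1, one_pos, fun i hi => absurd (hall i) hi⟩
  · push_neg at hall
    obtain ⟨i1, hi1⟩ := hall
    set s := Finset.univ.filter (fun i => der i ≠ 0) with hs
    have hsne : s.Nonempty := ⟨i1, by simp [hs, hi1]⟩
    obtain ⟨i0, hi0, hmin⟩ := s.exists_min_image (fun i => gap i / |der i|) hsne
    have hi0' : der i0 ≠ 0 := (Finset.mem_filter.1 hi0).2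
    refine ⟨gap i0 / |der i0|, div_pos (h i0 hi0') (abs_pos.2 hi0'), ?_⟩
    intro i hi
    have h1 : gap i0 / |der i0| ≤ gap i / |der i| := hmin i (by simp [hs, hi])
    have h2 : (gap i / |der i|) * |der i| = gap i := div_mul_cancel₀ _ (ne_of_gt (abs_pos.2 hi))
    calc (gap i0 / |der i0|) * |der i| ≤ (gap i / |der i|) * |der i| := by
          apply mul_le_mul_of_nonneg_right h1 (abs_nonneg _)
      _ = gap i := h2

lemma sum_int {γ : Type*} (s : Finset γ) (f : γ → ℝ)
    (h : ∀ i ∈ s, ∃ n : ℤ, f i = n) : ∃ n : ℤ, ∑ i ∈ s, f i = n := by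
  classical
  induction s using Finset.induction_on with
  | empty => exact ⟨0, by simp⟩
  | @insert a s ha ih =>
    obtain ⟨n, hn⟩ := h a (Finset.mem_insert_self _ _)
    obtain ⟨m, hm⟩ := ih (fun i hi => h i (Finset.mem_insert_of_mem hi))
    refine ⟨n + m, ?_⟩
    rw [Finset.sum_insert ha, hn, hm]
    push_cast
    ring

end Aux

/-- Every extreme point of the polytope `ℛ'` (used for two-matroid median) is
integral, i.e. has all coordinates in `{0, 1}`. -/
theorem polytope_R'_integral
    {F1 F2 D' : Type*} [Fintype F1] [Fintype F2] [Fintype D']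
    (M' : Matroid (F1 ⊕ F2)) (hM'E : M'.E = Set.univ)
    (M2 : Matroid F2) (hM2E : M2.E = Set.univ)
    (S : D' → Finset F1)
    (hdisj : ∀ j k, j ≠ k → Disjoint (S j) (S k))
    (lb1 ub1 lb2 ub2 lb ub : ℤ)
    (h1 : lb1 ≤ ub1) (h2 : lb2 ≤ ub2) (h : lb ≤ ub)
    (R : Set (F1 ⊕ F2 → ℝ))
    (hR : R = {z | (∀ i, 0 ≤ z i) ∧
      (∀ T : Finset (F1 ⊕ F2), ∑ i ∈ T, z i ≤ (matroidRank M' T : ℝ)) ∧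
      (∀ T : Finset F2, ∑ i ∈ T, z (Sum.inr i) ≤ (matroidRank M2 T : ℝ)) ∧
      ((lb1 : ℝ) ≤ ∑ i : F1, z (Sum.inl i)) ∧
      (∑ i : F1, z (Sum.inl i) ≤ (ub1 : ℝ)) ∧
      ((lb2 : ℝ) ≤ ∑ i : F2, z (Sum.inr i)) ∧
      (∑ i : F2, z (Sum.inr i) ≤ (ub2 : ℝ)) ∧
      ((lb : ℝ) ≤ ∑ i, z i) ∧ (∑ i, z i ≤ (ub : ℝ)) ∧
      (∀ j : D', ∑ i ∈ S j, z (Sum.inl i) = 1)}) :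
    ∀ z ∈ R.extremePoints ℝ, ∀ i, z i ∈ ({0, 1} : Set ℝ) := by
  intro z hz
  have hzR : z ∈ R := hz.1
  rw [hR] at hzR
  obtain ⟨hpos, hrk1, hrk2, hlb1, hub1, hlb2, hub2, hlbt, hubt, hSj⟩ := hzR
  -- the fractional support
  set Fr : Finset (F1 ⊕ F2) := Finset.univ.filter (fun i => ¬ ∃ n : ℤ, z i = n) with hFrdef
  have hoffFr : ∀ i, i ∉ Fr → ∃ n : ℤ, z i = n := by
    intro i hi
    by_contra hc
    exact hi (Finset.mem_filter.2 ⟨Finset.mem_univ _, hc⟩)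
  have hinFr : ∀ i ∈ Fr, ¬ ∃ n : ℤ, z i = n := fun i hi => (Finset.mem_filter.1 hi).2
  -- main claim : no fractional coordinates
  have hFr : Fr = ∅ := by
    by_contra hFrne'
    have hFrne : Fr.Nonempty := Finset.nonempty_of_ne_empty hFrne'
    -- ===== the main contradiction =====
    set T1 : Finset (Finset (F1 ⊕ F2)) :=
      Finset.univ.filter (fun T => ∑ i ∈ T, z i = (matroidRank M' T : ℝ)) with hT1def
    set T2 : Finset (Finset F2) :=
      Finset.univ.filter (fun T => ∑ i ∈ T, z (Sum.inr i) = (matroidRank M2 T : ℝ)) with hT2def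
    have hT1closed : ∀ A ∈ T1, ∀ B ∈ T1, A ∪ B ∈ T1 ∧ A ∩ B ∈ T1 := by
      intro A hA B hB
      have hA' := (Finset.mem_filter.1 hA).2
      have hB' := (Finset.mem_filter.1 hB).2
      have hsubmod := matroidRank_submod (M := M') (by rw [hM'E]) A B
      have hsum := Finset.sum_union_inter (s₁ := A) (s₂ := B) (f := z)
      have hU := hrk1 (A ∪ B)
      have hI := hrk1 (A ∩ B)
      have hcast : (matroidRank M' (A ∪ B) : ℝ) + (matroidRank M' (A ∩ B) : ℝ)
          ≤ (matroidRank M' A : ℝ) + (matroidRank M' B : ℝ) := by exact_mod_cast hsubmod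
      constructor
      · refine Finset.mem_filter.2 ⟨Finset.mem_univ _, ?_⟩; linarith
      · refine Finset.mem_filter.2 ⟨Finset.mem_univ _, ?_⟩; linarith
    have hT2closed : ∀ A ∈ T2, ∀ B ∈ T2, A ∪ B ∈ T2 ∧ A ∩ B ∈ T2 := by
      intro A hA B hB
      have hA' := (Finset.mem_filter.1 hA).2
      have hB' := (Finset.mem_filter.1 hB).2
      have hsubmod := matroidRank_submod (M := M2) (by rw [hM2E]) A B
      have hsum := Finset.sum_union_inter (s₁ := A) (s₂ := B) (f := fun i => z (Sum.inr i))
      have hU := hrk2 (A ∪ B)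
      have hI := hrk2 (A ∩ B)
      have hcast : (matroidRank M2 (A ∪ B) : ℝ) + (matroidRank M2 (A ∩ B) : ℝ)
          ≤ (matroidRank M2 A : ℝ) + (matroidRank M2 B : ℝ) := by exact_mod_cast hsubmod
      constructor
      · refine Finset.mem_filter.2 ⟨Finset.mem_univ _, ?_⟩; linarith
      · refine Finset.mem_filter.2 ⟨Finset.mem_univ _, ?_⟩; linarith
    have hT1empty : (∅ : Finset (F1 ⊕ F2)) ∈ T1 := by
      refine Finset.mem_filter.2 ⟨Finset.mem_univ _, ?_⟩
      rw [matroidRank_empty]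
      simp
    have hT2empty : (∅ : Finset F2) ∈ T2 := by
      refine Finset.mem_filter.2 ⟨Finset.mem_univ _, ?_⟩
      rw [matroidRank_empty]
      simp
    obtain ⟨C1, hC1T, hC1chain, hC1ctrl⟩ := exists_chain_control (Fintype.card (F1 ⊕ F2)) T1
      hT1empty (fun A hA B hB => (hT1closed A hA B hB).1)
      (fun A hA B hB => (hT1closed A hA B hB).2) (fun A _ => Finset.card_le_univ A)
    obtain ⟨C2, hC2T, hC2chain, hC2ctrl⟩ := exists_chain_control (Fintype.card F2) T2
      hT2empty (fun A hA B hB => (hT2closed A hA B hB).1)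
      (fun A hA B hB => (hT2closed A hA B hB).2) (fun A _ => Finset.card_le_univ A)
    set L1 : Finset (Finset (F1 ⊕ F2)) := C1 with hL1def
    have hlam1 : ∀ A ∈ L1, ∀ B ∈ L1, A ⊆ B ∨ B ⊆ A ∨ Disjoint A B :=
      fun A hA B hB => (hC1chain A hA B hB).elim Or.inl (fun h => Or.inr (Or.inl h))
    -- embeddings
    set inlE : F1 ↪ (F1 ⊕ F2) := ⟨Sum.inl, Sum.inl_injective⟩ with hinlE
    set inrE : F2 ↪ (F1 ⊕ F2) := ⟨Sum.inr, Sum.inr_injective⟩ with hinrE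
    set F1s : Finset (F1 ⊕ F2) := Finset.univ.map inlE with hF1sdef
    set F2s : Finset (F1 ⊕ F2) := Finset.univ.map inrE with hF2sdef
    have hsum_mapl : ∀ (A : Finset F1) (f : (F1 ⊕ F2) → ℝ),
        ∑ i ∈ A.map inlE, f i = ∑ i ∈ A, f (Sum.inl i) := fun A f => Finset.sum_map A inlE f
    have hsum_mapr : ∀ (A : Finset F2) (f : (F1 ⊕ F2) → ℝ),
        ∑ i ∈ A.map inrE, f i = ∑ i ∈ A, f (Sum.inr i) := fun A f => Finset.sum_map A inrE f
    have hsum_univt : ∀ f : (F1 ⊕ F2) → ℝ,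
        ∑ i ∈ (Finset.univ : Finset (F1 ⊕ F2)), f i
          = ∑ i : F1, f (Sum.inl i) + ∑ i : F2, f (Sum.inr i) := fun f => Fintype.sum_sum_type f
    set s1 : ℝ := ∑ i : F1, z (Sum.inl i) with hs1def
    set s2 : ℝ := ∑ i : F2, z (Sum.inr i) with hs2def
    set st : ℝ := ∑ i : (F1 ⊕ F2), z i with hstdef
    set L2 : Finset (Finset (F1 ⊕ F2)) :=
      (C2.image (fun A => A.map inrE)) ∪
      ((Finset.univ : Finset D').image (fun j => (S j).map inlE)) ∪
      ((if s1 = (lb1:ℝ) ∨ s1 = (ub1:ℝ) then {F1s} else ∅) ∪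
       (if s2 = (lb2:ℝ) ∨ s2 = (ub2:ℝ) then {F2s} else ∅) ∪
       (if st = (lb:ℝ) ∨ st = (ub:ℝ) then {(Finset.univ : Finset (F1 ⊕ F2))} else ∅)) with hL2def
    have hmemL2 : ∀ X ∈ L2, (∃ A ∈ C2, X = A.map inrE) ∨ (∃ j : D', X = (S j).map inlE) ∨
        (X = F1s ∧ (s1 = (lb1:ℝ) ∨ s1 = (ub1:ℝ))) ∨
        (X = F2s ∧ (s2 = (lb2:ℝ) ∨ s2 = (ub2:ℝ))) ∨
        (X = (Finset.univ : Finset (F1 ⊕ F2)) ∧ (st = (lb:ℝ) ∨ st = (ub:ℝ))) := by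
      intro X hX
      rw [hL2def] at hX
      simp only [Finset.mem_union] at hX
      rcases hX with ((hX | hX) | ((hX | hX) | hX))
      · obtain ⟨A, hA, hEq⟩ := Finset.mem_image.1 hX
        exact Or.inl ⟨A, hA, hEq.symm⟩
      · obtain ⟨j, _, hEq⟩ := Finset.mem_image.1 hX
        exact Or.inr (Or.inl ⟨j, hEq.symm⟩)
      · by_cases hc : s1 = (lb1:ℝ) ∨ s1 = (ub1:ℝ)
        · rw [if_pos hc] at hX
          exact Or.inr (Or.inr (Or.inl ⟨Finset.mem_singleton.1 hX, hc⟩))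
        · rw [if_neg hc] at hX
          exact absurd hX (Finset.notMem_empty X)
      · by_cases hc : s2 = (lb2:ℝ) ∨ s2 = (ub2:ℝ)
        · rw [if_pos hc] at hX
          exact Or.inr (Or.inr (Or.inr (Or.inl ⟨Finset.mem_singleton.1 hX, hc⟩)))
        · rw [if_neg hc] at hX
          exact absurd hX (Finset.notMem_empty X)
      · by_cases hc : st = (lb:ℝ) ∨ st = (ub:ℝ)
        · rw [if_pos hc] at hX
          exact Or.inr (Or.inr (Or.inr (Or.inr ⟨Finset.mem_singleton.1 hX, hc⟩)))
        · rw [if_neg hc] at hX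
          exact absurd hX (Finset.notMem_empty X)
    have hC2mem : ∀ A ∈ C2, A.map inrE ∈ L2 := by
      intro A hA
      rw [hL2def]
      exact Finset.mem_union_left _ (Finset.mem_union_left _ (Finset.mem_image_of_mem _ hA))
    have hSjmem : ∀ j : D', (S j).map inlE ∈ L2 := by
      intro j
      rw [hL2def]
      exact Finset.mem_union_left _
        (Finset.mem_union_right _ (Finset.mem_image_of_mem _ (Finset.mem_univ j)))
    have hF1smem : (s1 = (lb1:ℝ) ∨ s1 = (ub1:ℝ)) → F1s ∈ L2 := by
      intro hc
      rw [hL2def]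
      exact Finset.mem_union_right _ (Finset.mem_union_left _ (Finset.mem_union_left _
        (by rw [if_pos hc]; exact Finset.mem_singleton_self _)))
    have hF2smem : (s2 = (lb2:ℝ) ∨ s2 = (ub2:ℝ)) → F2s ∈ L2 := by
      intro hc
      rw [hL2def]
      exact Finset.mem_union_right _ (Finset.mem_union_left _ (Finset.mem_union_right _
        (by rw [if_pos hc]; exact Finset.mem_singleton_self _)))
    have hUnivmem : (st = (lb:ℝ) ∨ st = (ub:ℝ)) → (Finset.univ : Finset (F1 ⊕ F2)) ∈ L2 := by
      intro hc
      rw [hL2def]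
      exact Finset.mem_union_right _ (Finset.mem_union_right _
        (by rw [if_pos hc]; exact Finset.mem_singleton_self _))
    -- laminar facts
    have hmaprF2 : ∀ A : Finset F2, A.map inrE ⊆ F2s := by
      intro A
      rw [hF2sdef]
      exact Finset.map_subset_map.2 (Finset.subset_univ A)
    have hmaplF1 : ∀ A : Finset F1, A.map inlE ⊆ F1s := by
      intro A
      rw [hF1sdef]
      exact Finset.map_subset_map.2 (Finset.subset_univ A)
    have hd12 : Disjoint F1s F2s := by
      rw [Finset.disjoint_left]
      intro a ha hb
      rw [hF1sdef] at ha
      rw [hF2sdef] at hb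
      obtain ⟨x, _, hxa⟩ := Finset.mem_map.1 ha
      obtain ⟨y, _, hyb⟩ := Finset.mem_map.1 hb
      rw [← hxa] at hyb
      exact Sum.inl_ne_inr hyb.symm
    have hmaplinj : ∀ (A B : Finset F1), Disjoint A B → Disjoint (A.map inlE) (B.map inlE) := by
      intro A B hAB
      rw [Finset.disjoint_left]
      intro a ha hb
      obtain ⟨x, hx, hxa⟩ := Finset.mem_map.1 ha
      obtain ⟨y, hy, hyb⟩ := Finset.mem_map.1 hb
      rw [← hxa] at hyb
      have : y = x := Sum.inl_injective hyb
      rw [this] at hy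
      exact (Finset.disjoint_left.1 hAB) hx hy
    have hlam2 : ∀ A ∈ L2, ∀ B ∈ L2, A ⊆ B ∨ B ⊆ A ∨ Disjoint A B := by
      intro X hX Y hY
      rcases hmemL2 X hX with ⟨A,hA,rfl⟩|⟨j,rfl⟩|⟨rfl,_⟩|⟨rfl,_⟩|⟨rfl,_⟩ <;>
        rcases hmemL2 Y hY with ⟨A',hA',rfl⟩|⟨k,rfl⟩|⟨rfl,_⟩|⟨rfl,_⟩|⟨rfl,_⟩
      · rcases hC2chain A hA A' hA' with h | h
        · exact Or.inl (Finset.map_subset_map.2 h)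
        · exact Or.inr (Or.inl (Finset.map_subset_map.2 h))
      · exact Or.inr (Or.inr (hd12.symm.mono (hmaprF2 A) (hmaplF1 (S k))))
      · exact Or.inr (Or.inr (hd12.symm.mono_left (hmaprF2 A)))
      · exact Or.inl (hmaprF2 A)
      · exact Or.inl (Finset.subset_univ _)
      · exact Or.inr (Or.inr (hd12.mono (hmaplF1 (S j)) (hmaprF2 A')))
      · by_cases hjk : j = k
        · rw [hjk]; exact Or.inl (Finset.Subset.refl _)
        · exact Or.inr (Or.inr (hmaplinj _ _ (hdisj j k hjk)))
      · exact Or.inl (hmaplF1 (S j))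
      · exact Or.inr (Or.inr (hd12.mono_left (hmaplF1 (S j))))
      · exact Or.inl (Finset.subset_univ _)
      · exact Or.inr (Or.inr (hd12.mono_right (hmaprF2 A')))
      · exact Or.inr (Or.inl (hmaplF1 (S k)))
      · exact Or.inl (Finset.Subset.refl _)
      · exact Or.inr (Or.inr hd12)
      · exact Or.inl (Finset.subset_univ _)
      · exact Or.inr (Or.inl (hmaprF2 A'))
      · exact Or.inr (Or.inr (hd12.symm.mono_right (hmaplF1 (S k))))
      · exact Or.inr (Or.inr hd12.symm)
      · exact Or.inl (Finset.Subset.refl _)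
      · exact Or.inl (Finset.subset_univ _)
      · exact Or.inr (Or.inl (Finset.subset_univ _))
      · exact Or.inr (Or.inl (Finset.subset_univ _))
      · exact Or.inr (Or.inl (Finset.subset_univ _))
      · exact Or.inr (Or.inl (Finset.subset_univ _))
      · exact Or.inl (Finset.Subset.refl _)
    -- integrality of sums over members
    have hint1 : ∀ A ∈ L1, ∃ n : ℤ, ∑ i ∈ A, z i = n := by
      intro A hA
      have hAt := (Finset.mem_filter.1 (hC1T hA)).2
      exact ⟨(matroidRank M' A : ℤ), by rw [hAt]; push_cast; ring⟩
    have hint2 : ∀ X ∈ L2, ∃ n : ℤ, ∑ i ∈ X, z i = n := by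
      intro X hX
      rcases hmemL2 X hX with ⟨A,hA,rfl⟩|⟨j,rfl⟩|⟨rfl,hc⟩|⟨rfl,hc⟩|⟨rfl,hc⟩
      · have hAt := (Finset.mem_filter.1 (hC2T hA)).2
        exact ⟨(matroidRank M2 A : ℤ), by rw [hsum_mapr, hAt]; push_cast; ring⟩
      · exact ⟨1, by rw [hsum_mapl]; rw [hSj j]; norm_num⟩
      · have hsf1 : ∑ i ∈ F1s, z i = s1 := by rw [hF1sdef, hsum_mapl, hs1def]
        rcases hc with hc | hc
        · exact ⟨lb1, by rw [hsf1, hc]⟩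
        · exact ⟨ub1, by rw [hsf1, hc]⟩
      · have hsf2 : ∑ i ∈ F2s, z i = s2 := by rw [hF2sdef, hsum_mapr, hs2def]
        rcases hc with hc | hc
        · exact ⟨lb2, by rw [hsf2, hc]⟩
        · exact ⟨ub2, by rw [hsf2, hc]⟩
      · rcases hc with hc | hc
        · exact ⟨lb, by rw [show ∑ i ∈ (Finset.univ : Finset (F1 ⊕ F2)), z i = st from rfl, hc]⟩
        · exact ⟨ub, by rw [show ∑ i ∈ (Finset.univ : Finset (F1 ⊕ F2)), z i = st from rfl, hc]⟩
    -- blocks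
    have hblocks : ∀ (L : Finset (Finset (F1 ⊕ F2))),
        (∀ A ∈ L, ∀ B ∈ L, A ⊆ B ∨ B ⊆ A ∨ Disjoint A B) →
        (∀ A ∈ L, ∃ n : ℤ, ∑ i ∈ A, z i = n) →
        (∀ b ∈ (L.image (fun A => lamPriv L A ∩ Fr)).filter (fun b => b.Nonempty),
            b ⊆ Fr ∧ 2 ≤ b.card) ∧
        (∀ b ∈ (L.image (fun A => lamPriv L A ∩ Fr)).filter (fun b => b.Nonempty),
         ∀ b' ∈ (L.image (fun A => lamPriv L A ∩ Fr)).filter (fun b => b.Nonempty),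
            b ≠ b' → Disjoint b b') := by
      intro L hlam hint
      have hpint := lam_priv_int L hlam z hint
      constructor
      · intro b hb
        obtain ⟨hb1, hbne⟩ := Finset.mem_filter.1 hb
        obtain ⟨A, hA, hAb⟩ := Finset.mem_image.1 hb1
        refine ⟨hAb ▸ Finset.inter_subset_right, ?_⟩
        by_contra hcard
        push_neg at hcard
        have hposc : 1 ≤ b.card := Finset.card_pos.2 hbne
        have hc1 : b.card = 1 := by omega
        obtain ⟨x, hx⟩ := Finset.card_eq_one.1 hc1
        obtain ⟨n, hn⟩ := hpint A hA
        obtain ⟨m, hm⟩ := sum_int (lamPriv L A \ Fr) z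
          (fun i hi => hoffFr i (Finset.mem_sdiff.1 hi).2)
        have hsplit : ∑ i ∈ lamPriv L A ∩ Fr, z i + ∑ i ∈ lamPriv L A \ Fr, z i
            = ∑ i ∈ lamPriv L A, z i := Finset.sum_inter_add_sum_sdiff _ _ _
        have hbsum : ∑ i ∈ b, z i = z x := by rw [hx]; simp
        have hzx : ∑ i ∈ lamPriv L A ∩ Fr, z i = z x := by rw [hAb, hbsum]
        have hxint : ∃ k : ℤ, z x = k := ⟨n - m, by push_cast; linarith⟩
        have hxFr : x ∈ Fr := by
          have hxb : x ∈ b := by rw [hx]; exact Finset.mem_singleton_self x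
          have := hAb ▸ hxb
          exact (Finset.mem_inter.1 this).2
        exact (hinFr x hxFr) hxint
      · intro b hb b' hb' hne
        obtain ⟨hb1, _⟩ := Finset.mem_filter.1 hb
        obtain ⟨hb1', _⟩ := Finset.mem_filter.1 hb'
        obtain ⟨A, hA, hAb⟩ := Finset.mem_image.1 hb1
        obtain ⟨A', hA', hAb'⟩ := Finset.mem_image.1 hb1'
        have hAA' : A ≠ A' := by
          intro hhe
          rw [hhe] at hAb
          exact hne (hAb.symm.trans hAb')
        have := lamPriv_pairwise_disj L hlam A hA A' hA' hAA'
        rw [← hAb, ← hAb']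
        exact this.mono Finset.inter_subset_left Finset.inter_subset_left
    obtain ⟨hPb1, hPb2⟩ := hblocks L1 hlam1 hint1
    obtain ⟨hQb1, hQb2⟩ := hblocks L2 hlam2 hint2
    obtain ⟨d, hd0, hdsupp, hdP, hdQ⟩ := exists_perp Fr hFrne
      ((L1.image (fun A => lamPriv L1 A ∩ Fr)).filter (fun b => b.Nonempty))
      ((L2.image (fun A => lamPriv L2 A ∩ Fr)).filter (fun b => b.Nonempty))
      (fun b hb => (hPb1 b hb).1) (fun b hb => (hPb1 b hb).2) hPb2
      (fun b hb => (hQb1 b hb).1) (fun b hb => (hQb1 b hb).2) hQb2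
    have hdpriv : ∀ (L : Finset (Finset (F1 ⊕ F2))),
        (∀ b ∈ (L.image (fun A => lamPriv L A ∩ Fr)).filter (fun b => b.Nonempty),
          ∑ i ∈ b, d i = 0) →
        ∀ A ∈ L, ∑ i ∈ lamPriv L A, d i = 0 := by
      intro L hQ A hA
      have hsplit : ∑ i ∈ lamPriv L A ∩ Fr, d i + ∑ i ∈ lamPriv L A \ Fr, d i
          = ∑ i ∈ lamPriv L A, d i := Finset.sum_inter_add_sum_sdiff _ _ _
      have hz2 : ∑ i ∈ lamPriv L A \ Fr, d i = 0 :=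
        Finset.sum_eq_zero (fun i hi => hdsupp i (Finset.mem_sdiff.1 hi).2)
      by_cases hne : (lamPriv L A ∩ Fr).Nonempty
      · have hz1 : ∑ i ∈ lamPriv L A ∩ Fr, d i = 0 :=
          hQ _ (Finset.mem_filter.2 ⟨Finset.mem_image_of_mem _ hA, hne⟩)
        linarith
      · have he : lamPriv L A ∩ Fr = ∅ := Finset.not_nonempty_iff_eq_empty.1 hne
        rw [he] at hsplit
        simp only [Finset.sum_empty] at hsplit
        linarith
    have hdL1 : ∀ A ∈ L1, ∑ i ∈ A, d i = 0 := lam_zero L1 hlam1 d (hdpriv L1 hdP)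
    have hdL2 : ∀ X ∈ L2, ∑ i ∈ X, d i = 0 := lam_zero L2 hlam2 d (hdpriv L2 hdQ)
    have hdT1 : ∀ B ∈ T1, ∑ i ∈ B, d i = 0 := hC1ctrl d hdL1
    have hdC2 : ∀ A ∈ C2, ∑ i ∈ A, d (Sum.inr i) = 0 := by
      intro A hA
      have hh := hdL2 _ (hC2mem A hA)
      rwa [hsum_mapr] at hh
    have hdT2 : ∀ B ∈ T2, ∑ i ∈ B, d (Sum.inr i) = 0 :=
      hC2ctrl (fun i => d (Sum.inr i)) hdC2
    have hdSj : ∀ j : D', ∑ i ∈ S j, d (Sum.inl i) = 0 := by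
      intro j
      have hh := hdL2 _ (hSjmem j)
      rwa [hsum_mapl] at hh
    set t1 : ℝ := ∑ i : F1, d (Sum.inl i) with ht1def
    set t2 : ℝ := ∑ i : F2, d (Sum.inr i) with ht2def
    set tt : ℝ := ∑ i : (F1 ⊕ F2), d i with httdef
    have hdF1 : (s1 = (lb1:ℝ) ∨ s1 = (ub1:ℝ)) → t1 = 0 := by
      intro hc
      have hh := hdL2 F1s (hF1smem hc)
      rw [hF1sdef, hsum_mapl] at hh
      rw [ht1def]
      exact hh
    have hdF2 : (s2 = (lb2:ℝ) ∨ s2 = (ub2:ℝ)) → t2 = 0 := by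
      intro hc
      have hh := hdL2 F2s (hF2smem hc)
      rw [hF2sdef, hsum_mapr] at hh
      rw [ht2def]
      exact hh
    have hdTot : (st = (lb:ℝ) ∨ st = (ub:ℝ)) → tt = 0 := by
      intro hc
      have hh := hdL2 _ (hUnivmem hc)
      rw [httdef]
      exact hh
    -- strictness of non-tight constraints
    have hnt1 : ∀ T : Finset (F1 ⊕ F2), ∑ i ∈ T, d i ≠ 0 →
        ∑ i ∈ T, z i < (matroidRank M' T : ℝ) := by
      intro T hT
      refine lt_of_le_of_ne (hrk1 T) ?_
      intro he
      exact hT (hdT1 T (Finset.mem_filter.2 ⟨Finset.mem_univ _, he⟩))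
    have hnt2 : ∀ T : Finset F2, ∑ i ∈ T, d (Sum.inr i) ≠ 0 →
        ∑ i ∈ T, z (Sum.inr i) < (matroidRank M2 T : ℝ) := by
      intro T hT
      refine lt_of_le_of_ne (hrk2 T) ?_
      intro he
      exact hT (hdT2 T (Finset.mem_filter.2 ⟨Finset.mem_univ _, he⟩))
    have hntpos : ∀ i, d i ≠ 0 → 0 < z i := by
      intro i hdi
      have hiFr : i ∈ Fr := by
        by_contra hiFr
        exact hdi (hdsupp i hiFr)
      rcases (hpos i).lt_or_eq with hlt | heq
      · exact hlt
      · exact absurd ⟨(0 : ℤ), by rw [← heq]; norm_num⟩ (hinFr i hiFr)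
    have hnb1 : t1 ≠ 0 → (lb1:ℝ) < s1 ∧ s1 < (ub1:ℝ) := by
      intro ht
      have hc : ¬(s1 = (lb1:ℝ) ∨ s1 = (ub1:ℝ)) := fun hc => ht (hdF1 hc)
      push_neg at hc
      exact ⟨lt_of_le_of_ne hlb1 (Ne.symm hc.1), lt_of_le_of_ne hub1 hc.2⟩
    have hnb2 : t2 ≠ 0 → (lb2:ℝ) < s2 ∧ s2 < (ub2:ℝ) := by
      intro ht
      have hc : ¬(s2 = (lb2:ℝ) ∨ s2 = (ub2:ℝ)) := fun hc => ht (hdF2 hc)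
      push_neg at hc
      exact ⟨lt_of_le_of_ne hlb2 (Ne.symm hc.1), lt_of_le_of_ne hub2 hc.2⟩
    have hnbt : tt ≠ 0 → (lb:ℝ) < st ∧ st < (ub:ℝ) := by
      intro ht
      have hc : ¬(st = (lb:ℝ) ∨ st = (ub:ℝ)) := fun hc => ht (hdTot hc)
      push_neg at hc
      exact ⟨lt_of_le_of_ne hlbt (Ne.symm hc.1), lt_of_le_of_ne hubt hc.2⟩
    -- epsilon
    obtain ⟨ε, hε, heps⟩ := exists_eps
      (Sum.elim (fun T : Finset (F1 ⊕ F2) => (matroidRank M' T : ℝ) - ∑ i ∈ T, z i)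
        (Sum.elim (fun T : Finset F2 => (matroidRank M2 T : ℝ) - ∑ i ∈ T, z (Sum.inr i))
          (Sum.elim (fun i : F1 ⊕ F2 => z i)
            (fun k : Fin 6 => ![ (ub1:ℝ) - s1, s1 - lb1, (ub2:ℝ) - s2, s2 - lb2,
              (ub:ℝ) - st, st - lb ] k))))
      (Sum.elim (fun T : Finset (F1 ⊕ F2) => ∑ i ∈ T, d i)
        (Sum.elim (fun T : Finset F2 => ∑ i ∈ T, d (Sum.inr i))
          (Sum.elim (fun i : F1 ⊕ F2 => d i)
            (fun k : Fin 6 => ![t1, t1, t2, t2, tt, tt] k))))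
      (by
        rintro (T | T | i | k) hne
        · simp only [Sum.elim_inl] at hne ⊢
          linarith [hnt1 T hne]
        · simp only [Sum.elim_inl, Sum.elim_inr] at hne ⊢
          linarith [hnt2 T hne]
        · simp only [Sum.elim_inl, Sum.elim_inr] at hne ⊢
          exact hntpos i hne
        · simp only [Sum.elim_inr] at hne ⊢
          fin_cases k
          · simp at hne ⊢
            linarith [(hnb1 hne).2]
          · simp at hne ⊢
            linarith [(hnb1 hne).1]
          · simp at hne ⊢
            linarith [(hnb2 hne).2]
          · simp at hne ⊢
            linarith [(hnb2 hne).1]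
          · simp at hne ⊢
            linarith [(hnbt hne).2]
          · have hne' : tt ≠ 0 := hne
            show (0:ℝ) < st - (lb:ℝ)
            linarith [(hnbt hne').1])
    -- feasibility of perturbations
    have hfeas : ∀ σ : ℝ, |σ| = ε → (fun i => z i + σ * d i) ∈ R := by
      intro σ hσ
      have hkey : ∀ (dv gv : ℝ), (dv ≠ 0 → ε * |dv| ≤ gv) → (dv = 0 → 0 ≤ gv) →
          σ * dv ≤ gv := by
        intro dv gv hb h0
        by_cases hdv : dv = 0
        · rw [hdv]; simpa using h0 hdv
        · calc σ * dv ≤ |σ * dv| := le_abs_self _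
            _ = ε * |dv| := by rw [abs_mul, hσ]
            _ ≤ gv := hb hdv
      rw [hR]
      refine ⟨?_, ?_, ?_, ?_, ?_, ?_, ?_, ?_, ?_, ?_⟩
      · intro i
        show (0:ℝ) ≤ z i + σ * d i
        have hk := hkey (-(d i)) (z i)
          (fun hne => by
            have hne' : d i ≠ 0 := fun hh => hne (by rw [hh]; ring)
            have := heps (Sum.inr (Sum.inr (Sum.inl i))) (by simpa using hne')
            simpa [abs_neg] using this)
          (fun _ => hpos i)
        nlinarith [hk]
      · intro T
        show ∑ i ∈ T, (z i + σ * d i) ≤ (matroidRank M' T : ℝ)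
        have hd2 := hkey (∑ i ∈ T, d i) ((matroidRank M' T : ℝ) - ∑ i ∈ T, z i)
          (fun hne => by simpa using heps (Sum.inl T) (by simpa using hne))
          (fun _ => by linarith [hrk1 T])
        have hsplit : ∑ i ∈ T, (z i + σ * d i) = ∑ i ∈ T, z i + σ * ∑ i ∈ T, d i := by
          rw [Finset.sum_add_distrib, Finset.mul_sum]
        rw [hsplit]
        linarith
      · intro T
        show ∑ i ∈ T, (z (Sum.inr i) + σ * d (Sum.inr i)) ≤ (matroidRank M2 T : ℝ)
        have hd2 := hkey (∑ i ∈ T, d (Sum.inr i)) ((matroidRank M2 T : ℝ) - ∑ i ∈ T, z (Sum.inr i))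
          (fun hne => by simpa using heps (Sum.inr (Sum.inl T)) (by simpa using hne))
          (fun _ => by linarith [hrk2 T])
        have hsplit : ∑ i ∈ T, (z (Sum.inr i) + σ * d (Sum.inr i))
            = ∑ i ∈ T, z (Sum.inr i) + σ * ∑ i ∈ T, d (Sum.inr i) := by
          rw [Finset.sum_add_distrib, Finset.mul_sum]
        rw [hsplit]
        linarith
      · show (lb1:ℝ) ≤ ∑ i : F1, (z (Sum.inl i) + σ * d (Sum.inl i))
        have hd2 := hkey (-t1) (s1 - lb1)
          (fun hne => by
            have hne' : t1 ≠ 0 := fun hh => hne (by rw [hh]; ring)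
            have := heps (Sum.inr (Sum.inr (Sum.inr 1))) (by simpa using hne')
            simpa [abs_neg] using this)
          (fun _ => by linarith [hlb1])
        have hsplit : ∑ i : F1, (z (Sum.inl i) + σ * d (Sum.inl i)) = s1 + σ * t1 := by
          rw [Finset.sum_add_distrib, ← Finset.mul_sum, hs1def, ht1def]
        rw [hsplit]
        linarith
      · show ∑ i : F1, (z (Sum.inl i) + σ * d (Sum.inl i)) ≤ (ub1:ℝ)
        have hd2 := hkey t1 ((ub1:ℝ) - s1)
          (fun hne => by
            have := heps (Sum.inr (Sum.inr (Sum.inr 0))) (by simpa using hne)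
            simpa using this)
          (fun _ => by linarith [hub1])
        have hsplit : ∑ i : F1, (z (Sum.inl i) + σ * d (Sum.inl i)) = s1 + σ * t1 := by
          rw [Finset.sum_add_distrib, ← Finset.mul_sum, hs1def, ht1def]
        rw [hsplit]
        linarith
      · show (lb2:ℝ) ≤ ∑ i : F2, (z (Sum.inr i) + σ * d (Sum.inr i))
        have hd2 := hkey (-t2) (s2 - lb2)
          (fun hne => by
            have hne' : t2 ≠ 0 := fun hh => hne (by rw [hh]; ring)
            have := heps (Sum.inr (Sum.inr (Sum.inr 3))) (by simpa using hne')
            simpa [abs_neg] using this)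
          (fun _ => by linarith [hlb2])
        have hsplit : ∑ i : F2, (z (Sum.inr i) + σ * d (Sum.inr i)) = s2 + σ * t2 := by
          rw [Finset.sum_add_distrib, ← Finset.mul_sum, hs2def, ht2def]
        rw [hsplit]
        linarith
      · show ∑ i : F2, (z (Sum.inr i) + σ * d (Sum.inr i)) ≤ (ub2:ℝ)
        have hd2 := hkey t2 ((ub2:ℝ) - s2)
          (fun hne => by
            have := heps (Sum.inr (Sum.inr (Sum.inr 2))) (by simpa using hne)
            simpa using this)
          (fun _ => by linarith [hub2])
        have hsplit : ∑ i : F2, (z (Sum.inr i) + σ * d (Sum.inr i)) = s2 + σ * t2 := by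
          rw [Finset.sum_add_distrib, ← Finset.mul_sum, hs2def, ht2def]
        rw [hsplit]
        linarith
      · show (lb:ℝ) ≤ ∑ i : F1 ⊕ F2, (z i + σ * d i)
        have hd2 := hkey (-tt) (st - lb)
          (fun hne => by
            have hne' : tt ≠ 0 := fun hh => hne (by rw [hh]; ring)
            have := heps (Sum.inr (Sum.inr (Sum.inr 5))) (by simpa using hne')
            simpa [abs_neg] using this)
          (fun _ => by linarith [hlbt])
        have hsplit : ∑ i : F1 ⊕ F2, (z i + σ * d i) = st + σ * tt := by
          rw [Finset.sum_add_distrib, ← Finset.mul_sum, hstdef, httdef]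
        rw [hsplit]
        linarith
      · show ∑ i : F1 ⊕ F2, (z i + σ * d i) ≤ (ub:ℝ)
        have hd2 := hkey tt ((ub:ℝ) - st)
          (fun hne => by
            have := heps (Sum.inr (Sum.inr (Sum.inr 4))) (by simpa using hne)
            simpa using this)
          (fun _ => by linarith [hubt])
        have hsplit : ∑ i : F1 ⊕ F2, (z i + σ * d i) = st + σ * tt := by
          rw [Finset.sum_add_distrib, ← Finset.mul_sum, hstdef, httdef]
        rw [hsplit]
        linarith
      · intro j
        show ∑ i ∈ S j, (z (Sum.inl i) + σ * d (Sum.inl i)) = 1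
        have hsplit : ∑ i ∈ S j, (z (Sum.inl i) + σ * d (Sum.inl i))
            = ∑ i ∈ S j, z (Sum.inl i) + σ * ∑ i ∈ S j, d (Sum.inl i) := by
          rw [Finset.sum_add_distrib, Finset.mul_sum]
        rw [hsplit, hSj j, hdSj j]
        ring
    -- contradiction with extremality
    obtain ⟨i0, hi0⟩ := Function.ne_iff.1 hd0
    have hmem1 : (fun i => z i + ε * d i) ∈ R := hfeas ε (abs_of_pos hε)
    have hmem2 : (fun i => z i + (-ε) * d i) ∈ R :=
      hfeas (-ε) (by rw [abs_neg]; exact abs_of_pos hε)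
    have hseg : z ∈ openSegment ℝ (fun i => z i + ε * d i) (fun i => z i + (-ε) * d i) := by
      refine ⟨1/2, 1/2, by norm_num, by norm_num, by norm_num, ?_⟩
      funext i
      simp only [Pi.add_apply, Pi.smul_apply, smul_eq_mul]
      ring
    have hcon := (mem_extremePoints.1 hz).2 _ hmem1 _ hmem2 hseg
    have hcf := congrFun hcon.1 i0
    have : ε * d i0 = 0 := by linarith [hcf]
    rcases mul_eq_zero.1 this with hh | hh
    · exact absurd hh (ne_of_gt hε)
    · exact hi0 hh
  -- conclude
  intro i
  have hiFr : i ∉ Fr := by rw [hFr]; exact Finset.notMem_empty _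
  obtain ⟨n, hn⟩ := hoffFr i hiFr
  have h0 : (0 : ℝ) ≤ n := hn ▸ hpos i
  have hle1 : z i ≤ 1 := by
    have := hrk1 {i}
    simp only [Finset.sum_singleton] at this
    refine le_trans this ?_
    have hrle := matroidRank_le_card (M := M') ({i} : Finset (F1 ⊕ F2))
    simp only [Finset.card_singleton] at hrle
    exact_mod_cast hrle
  have h1n : (n : ℝ) ≤ 1 := hn ▸ hle1
  have : n = 0 ∨ n = 1 := by
    have h0' : (0 : ℤ) ≤ n := by exact_mod_cast h0
    have h1' : n ≤ 1 := by exact_mod_cast h1n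
    omega
  rcases this with rfl | rfl
  · left; simpa using hn
  · right; simpa using hn
end

section
/- For every extreme point ŷ of 𝒦 there is at most one index s ∈ D such that G_s contains a coordinate i with ŷ_i ∉ {0, 1/2, 1}. Moreover, if such an index s exists and 1/2 < ∑_{i∈G_s} ŷ_i < 1, then there is exactly one i ∈ F'_s with ŷ_i > 0. -/
open scoped Classical
open Finset


private lemma exists_eps_aux {α : Type*} [Fintype α] (c : α → ℝ) (hc : ∀ a, 0 < c a) :
    ∃ ε : ℝ, 0 < ε ∧ ∀ a, ε ≤ c a := by
  rcases isEmpty_or_nonempty α with h | h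
  · exact ⟨1, one_pos, fun a => (h.false a).elim⟩
  · obtain ⟨a₀, -, ha₀⟩ := Finset.exists_min_image Finset.univ c
      ⟨Classical.arbitrary α, Finset.mem_univ _⟩
    exact ⟨c a₀, hc a₀, fun a => ha₀ a (Finset.mem_univ a)⟩

private lemma exists_pos_of_sum_pos {ι : Type*} (S : Finset ι) (f : ι → ℝ)
    (h : 0 < ∑ i ∈ S, f i) : ∃ i ∈ S, 0 < f i := by
  by_contra hc; push_neg at hc
  exact absurd (Finset.sum_nonpos hc) (not_le.mpr h)

private lemma perturb_zero {ι D : Type*} [Fintype ι] [Fintype D]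
    (F' G : D → Finset ι) (w : ι → ℝ) (B : ℝ) (K : Set (ι → ℝ))
    (hK : K = {v | (∀ i, 0 ≤ v i) ∧
      (∀ j, (1/2 : ℝ) ≤ ∑ i ∈ F' j, v i ∧ ∑ i ∈ G j, v i ≤ 1) ∧
      (∑ i, w i * v i ≤ B)})
    (yhat : ι → ℝ) (hy : yhat ∈ K.extremePoints ℝ)
    (d : ι → ℝ)
    (h0 : ∀ i, d i ≠ 0 → 0 < yhat i)
    (hF : ∀ j, (∑ i ∈ F' j, d i = 0) ∨ (1/2 : ℝ) < ∑ i ∈ F' j, yhat i)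
    (hG : ∀ j, (∑ i ∈ G j, d i = 0) ∨ ∑ i ∈ G j, yhat i < 1)
    (hw : ∑ i, w i * d i = 0) : d = 0 := by
  obtain ⟨hyK, hext⟩ := hy
  have hyK' := hyK
  rw [hK] at hyK'
  obtain ⟨hpos, hcl, hknap⟩ := hyK'
  obtain ⟨ε₁, hε₁, hb₁⟩ := exists_eps_aux
    (fun i : ι => if h : d i = 0 then 1 else yhat i / |d i|)
    (fun i => by
      by_cases h : d i = 0
      · simp [h]
      · simp only [h, dif_neg, not_false_iff]
        exact div_pos (h0 i h) (abs_pos.2 h))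
  obtain ⟨ε₂, hε₂, hb₂⟩ := exists_eps_aux
    (fun j : D => if h : (∑ i ∈ F' j, d i) = 0 then 1
      else (∑ i ∈ F' j, yhat i - 1/2) / |∑ i ∈ F' j, d i|)
    (fun j => by
      by_cases h : (∑ i ∈ F' j, d i) = 0
      · simp [h]
      · simp only [h, dif_neg, not_false_iff]
        refine div_pos ?_ (abs_pos.2 h)
        rcases hF j with h' | h'
        · exact absurd h' h
        · linarith)
  obtain ⟨ε₃, hε₃, hb₃⟩ := exists_eps_aux
    (fun j : D => if h : (∑ i ∈ G j, d i) = 0 then 1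
      else (1 - ∑ i ∈ G j, yhat i) / |∑ i ∈ G j, d i|)
    (fun j => by
      by_cases h : (∑ i ∈ G j, d i) = 0
      · simp [h]
      · simp only [h, dif_neg, not_false_iff]
        refine div_pos ?_ (abs_pos.2 h)
        rcases hG j with h' | h'
        · exact absurd h' h
        · linarith)
  set ε := min ε₁ (min ε₂ ε₃) with hεdef
  have hε : 0 < ε := lt_min hε₁ (lt_min hε₂ hε₃)
  have hεle₁ : ε ≤ ε₁ := min_le_left _ _
  have hεle₂ : ε ≤ ε₂ := le_trans (min_le_right _ _) (min_le_left _ _)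
  have hεle₃ : ε ≤ ε₃ := le_trans (min_le_right _ _) (min_le_right _ _)
  have key : ∀ t : ℝ, |t| ≤ ε → (fun i => yhat i + t * d i) ∈ K := by
    intro t ht
    rw [hK]
    refine ⟨?_, ?_, ?_⟩
    · intro i
      by_cases h : d i = 0
      · simpa [h] using hpos i
      · have h1 : ε ≤ yhat i / |d i| := le_trans hεle₁ (by simpa [h] using hb₁ i)
        have h2 : 0 < |d i| := abs_pos.2 h
        have h3 : ε * |d i| ≤ yhat i := (le_div_iff₀ h2).mp h1
        have h4 : |t * d i| ≤ ε * |d i| := by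
          rw [abs_mul]; exact mul_le_mul_of_nonneg_right ht (abs_nonneg _)
        have h5 := neg_abs_le (t * d i)
        show 0 ≤ yhat i + t * d i
        linarith
    · intro j
      constructor
      · have hsum : ∑ i ∈ F' j, (yhat i + t * d i)
            = ∑ i ∈ F' j, yhat i + t * ∑ i ∈ F' j, d i := by
          rw [Finset.sum_add_distrib, Finset.mul_sum]
        rw [hsum]
        by_cases h : (∑ i ∈ F' j, d i) = 0
        · rw [h]; simpa using (hcl j).1
        · have h1 : ε ≤ (∑ i ∈ F' j, yhat i - 1/2) / |∑ i ∈ F' j, d i| :=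
            le_trans hεle₂ (by simpa [h] using hb₂ j)
          have h2 : 0 < |∑ i ∈ F' j, d i| := abs_pos.2 h
          have h3 : ε * |∑ i ∈ F' j, d i| ≤ ∑ i ∈ F' j, yhat i - 1/2 := (le_div_iff₀ h2).mp h1
          have h4 : |t * ∑ i ∈ F' j, d i| ≤ ε * |∑ i ∈ F' j, d i| := by
            rw [abs_mul]; exact mul_le_mul_of_nonneg_right ht (abs_nonneg _)
          have h5 := neg_abs_le (t * ∑ i ∈ F' j, d i)
          linarith
      · have hsum : ∑ i ∈ G j, (yhat i + t * d i)
            = ∑ i ∈ G j, yhat i + t * ∑ i ∈ G j, d i := by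
          rw [Finset.sum_add_distrib, Finset.mul_sum]
        rw [hsum]
        by_cases h : (∑ i ∈ G j, d i) = 0
        · rw [h]; simpa using (hcl j).2
        · have h1 : ε ≤ (1 - ∑ i ∈ G j, yhat i) / |∑ i ∈ G j, d i| :=
            le_trans hεle₃ (by simpa [h] using hb₃ j)
          have h2 : 0 < |∑ i ∈ G j, d i| := abs_pos.2 h
          have h3 : ε * |∑ i ∈ G j, d i| ≤ 1 - ∑ i ∈ G j, yhat i := (le_div_iff₀ h2).mp h1
          have h4 : |t * ∑ i ∈ G j, d i| ≤ ε * |∑ i ∈ G j, d i| := by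
            rw [abs_mul]; exact mul_le_mul_of_nonneg_right ht (abs_nonneg _)
          have h5 := le_abs_self (t * ∑ i ∈ G j, d i)
          linarith
    · have hsum : ∑ i, w i * (yhat i + t * d i)
          = ∑ i, w i * yhat i + t * ∑ i, w i * d i := by
        rw [Finset.mul_sum, ← Finset.sum_add_distrib]
        exact Finset.sum_congr rfl (fun i _ => by ring)
      rw [hsum, hw]
      simpa using hknap
  have hmem₁ : (fun i => yhat i + ε * d i) ∈ K := key ε (le_of_eq (abs_of_pos hε))
  have hmem₂ : (fun i => yhat i + (-ε) * d i) ∈ K := key (-ε) (by rw [abs_neg, abs_of_pos hε])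
  have hseg : yhat ∈ openSegment ℝ (fun i => yhat i + ε * d i) (fun i => yhat i + (-ε) * d i) := by
    refine ⟨1/2, 1/2, by norm_num, by norm_num, by norm_num, ?_⟩
    funext i
    simp only [Pi.add_apply, Pi.smul_apply, smul_eq_mul]
    ring
  have h1 := hext hmem₁ hmem₂ hseg
  funext i
  have h2 : yhat i + ε * d i = yhat i := congrFun h1 i
  have h3 : ε * d i = 0 := by linarith
  simp only [Pi.zero_apply]
  exact (mul_eq_zero.mp h3).resolve_left hε.ne'
private lemma two_dir {ι D : Type*} [Fintype ι] [Fintype D]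
    (F' G : D → Finset ι) (w : ι → ℝ) (B : ℝ) (K : Set (ι → ℝ))
    (hK : K = {v | (∀ i, 0 ≤ v i) ∧
      (∀ j, (1/2 : ℝ) ≤ ∑ i ∈ F' j, v i ∧ ∑ i ∈ G j, v i ≤ 1) ∧
      (∑ i, w i * v i ≤ B)})
    (yhat : ι → ℝ) (hy : yhat ∈ K.extremePoints ℝ)
    (d d' : ι → ℝ)
    (h0 : ∀ i, d i ≠ 0 → 0 < yhat i)
    (hF : ∀ j, (∑ i ∈ F' j, d i = 0) ∨ (1/2 : ℝ) < ∑ i ∈ F' j, yhat i)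
    (hG : ∀ j, (∑ i ∈ G j, d i = 0) ∨ ∑ i ∈ G j, yhat i < 1)
    (h0' : ∀ i, d' i ≠ 0 → 0 < yhat i)
    (hF' : ∀ j, (∑ i ∈ F' j, d' i = 0) ∨ (1/2 : ℝ) < ∑ i ∈ F' j, yhat i)
    (hG' : ∀ j, (∑ i ∈ G j, d' i = 0) ∨ ∑ i ∈ G j, yhat i < 1)
    (i₀ : ι) (hdi : d i₀ ≠ 0) (hd'i : d' i₀ = 0) (hd'ne : d' ≠ 0) : False := by
  set c : ℝ := ∑ i, w i * d i with hc
  set c' : ℝ := ∑ i, w i * d' i with hc'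
  by_cases hcz : c = 0
  · have := perturb_zero F' G w B K hK yhat hy d h0 hF hG hcz
    exact hdi (by rw [this]; rfl)
  · have hsum : ∀ S : Finset ι, ∑ i ∈ S, (c' * d i - c * d' i)
        = c' * ∑ i ∈ S, d i - c * ∑ i ∈ S, d' i := by
      intro S
      rw [Finset.sum_sub_distrib, Finset.mul_sum, Finset.mul_sum]
    have huz : (fun i => c' * d i - c * d' i) = 0 := by
      apply perturb_zero F' G w B K hK yhat hy
      · intro i hi
        by_cases h : d i = 0
        · refine h0' i (fun h' => hi ?_)
          simp [h, h']
        · exact h0 i h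
      · intro j
        rcases hF j with h | h
        · rcases hF' j with h' | h'
          · left; rw [hsum, h, h']; ring
          · right; exact h'
        · right; exact h
      · intro j
        rcases hG j with h | h
        · rcases hG' j with h' | h'
          · left; rw [hsum, h, h']; ring
          · right; exact h'
        · right; exact h
      · have : ∑ i, w i * (c' * d i - c * d' i)
            = c' * ∑ i, w i * d i - c * ∑ i, w i * d' i := by
          rw [Finset.mul_sum, Finset.mul_sum, ← Finset.sum_sub_distrib]
          exact Finset.sum_congr rfl (fun i _ => by ring)
        rw [this, ← hc, ← hc']
        ring
    have h1 : c' = 0 := by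
      have h2 : c' * d i₀ - c * d' i₀ = 0 := by
        have := congrFun huz i₀
        simpa using this
      rw [hd'i] at h2
      have : c' * d i₀ = 0 := by linarith
      exact (mul_eq_zero.mp this).resolve_right hdi
    apply hd'ne
    funext i
    have h2 : c' * d i - c * d' i = 0 := by simpa using congrFun huz i
    rw [h1] at h2
    simp only [Pi.zero_apply]
    have : c * d' i = 0 := by linarith
    exact (mul_eq_zero.mp this).resolve_left hcz
private lemma sum_ind {ι : Type*} (S : Finset ι) (a : ι) :
    ∑ i ∈ S, (if i = a then (1:ℝ) else 0) = if a ∈ S then 1 else 0 :=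
  Finset.sum_ite_eq' S a fun _ => 1

private lemma dir_single {ι D : Type*} [Fintype ι] [Fintype D]
    (F' G : D → Finset ι) (hFG : ∀ j, F' j ⊆ G j)
    (hdisj : ∀ j k, j ≠ k → Disjoint (G j) (G k))
    (yhat : ι → ℝ) (s : D) (a : ι) (ha : a ∈ G s) (hya : 0 < yhat a)
    (hslackG : ∑ i ∈ G s, yhat i < 1)
    (hFcond : a ∈ F' s → (1/2 : ℝ) < ∑ i ∈ F' s, yhat i) :
    ∃ d : ι → ℝ, d a ≠ 0 ∧ (∀ i, i ≠ a → d i = 0) ∧ (∀ i, d i ≠ 0 → i ∈ G s) ∧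
      (∀ i, d i ≠ 0 → 0 < yhat i) ∧
      (∀ j, (∑ i ∈ F' j, d i = 0) ∨ (1/2 : ℝ) < ∑ i ∈ F' j, yhat i) ∧
      (∀ j, (∑ i ∈ G j, d i = 0) ∨ ∑ i ∈ G j, yhat i < 1) := by
  refine ⟨fun i => if i = a then 1 else 0, by simp, fun i h => by simp [h], ?_, ?_, ?_, ?_⟩
  · intro i hi
    by_cases h : i = a
    · rwa [h]
    · simp [h] at hi
  · intro i hi
    by_cases h : i = a
    · rwa [h]
    · simp [h] at hi
  · intro j
    rw [sum_ind]
    by_cases hj : a ∈ F' j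
    · have hjs : j = s := by
        by_contra hne
        exact Finset.disjoint_left.mp (hdisj s j (fun h => hne h.symm)) ha (hFG j hj)
      right
      rw [hjs]
      exact hFcond (by rwa [hjs] at hj)
    · left; simp [hj]
  · intro j
    rw [sum_ind]
    by_cases hj : a ∈ G j
    · have hjs : j = s := by
        by_contra hne
        exact Finset.disjoint_left.mp (hdisj s j (fun h => hne h.symm)) ha hj
      right
      rw [hjs]
      exact hslackG
    · left; simp [hj]

private lemma dir_pair {ι D : Type*} [Fintype ι] [Fintype D]
    (F' G : D → Finset ι) (hFG : ∀ j, F' j ⊆ G j)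
    (hdisj : ∀ j k, j ≠ k → Disjoint (G j) (G k))
    (yhat : ι → ℝ) (s : D) (a b : ι) (ha : a ∈ G s) (hb : b ∈ G s) (hab : a ≠ b)
    (hya : 0 < yhat a) (hyb : 0 < yhat b)
    (hFcond : (a ∈ F' s ↔ b ∈ F' s) ∨ (1/2 : ℝ) < ∑ i ∈ F' s, yhat i) :
    ∃ d : ι → ℝ, d a ≠ 0 ∧ (∀ i, i ≠ a → i ≠ b → d i = 0) ∧ (∀ i, d i ≠ 0 → i ∈ G s) ∧
      (∀ i, d i ≠ 0 → 0 < yhat i) ∧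
      (∀ j, (∑ i ∈ F' j, d i = 0) ∨ (1/2 : ℝ) < ∑ i ∈ F' j, yhat i) ∧
      (∀ j, (∑ i ∈ G j, d i = 0) ∨ ∑ i ∈ G j, yhat i < 1) := by
  have hsum : ∀ S : Finset ι,
      ∑ i ∈ S, ((if i = a then (1:ℝ) else 0) - (if i = b then 1 else 0))
        = (if a ∈ S then (1:ℝ) else 0) - (if b ∈ S then 1 else 0) := by
    intro S
    rw [Finset.sum_sub_distrib, sum_ind, sum_ind]
  have hmemj : ∀ (j : D), j ≠ s → ∀ i ∈ G s, i ∉ G j := by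
    intro j hj i hi
    exact Finset.disjoint_left.mp (hdisj s j (fun h => hj h.symm)) hi
  refine ⟨fun i => (if i = a then 1 else 0) - (if i = b then 1 else 0),
    by simp [hab], fun i h h' => by simp [h, h'], ?_, ?_, ?_, ?_⟩
  · intro i hi
    by_cases h : i = a
    · rwa [h]
    · by_cases h' : i = b
      · rwa [h']
      · simp [h, h'] at hi
  · intro i hi
    by_cases h : i = a
    · rwa [h]
    · by_cases h' : i = b
      · rwa [h']
      · simp [h, h'] at hi
  · intro j
    rw [hsum]
    by_cases hjs : j = s
    · subst hjs
      rcases hFcond with h | h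
      · left
        by_cases hmem : a ∈ F' j
        · simp [hmem, h.mp hmem]
        · have hmb : b ∉ F' j := fun hb' => hmem (h.mpr hb')
          simp [hmem, hmb]
      · right; exact h
    · left
      have h1 : a ∉ F' j := fun h => hmemj j hjs a ha (hFG j h)
      have h2 : b ∉ F' j := fun h => hmemj j hjs b hb (hFG j h)
      simp [h1, h2]
  · intro j
    rw [hsum]
    left
    by_cases hjs : j = s
    · subst hjs
      simp [ha, hb]
    · simp [hmemj j hjs a ha, hmemj j hjs b hb]
private lemma dir_exists {ι D : Type*} [Fintype ι] [Fintype D]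
    (F' G : D → Finset ι) (hFG : ∀ j, F' j ⊆ G j)
    (hdisj : ∀ j k, j ≠ k → Disjoint (G j) (G k))
    (yhat : ι → ℝ)
    (hpos : ∀ i, 0 ≤ yhat i)
    (hcl : ∀ j, (1/2 : ℝ) ≤ ∑ i ∈ F' j, yhat i ∧ ∑ i ∈ G j, yhat i ≤ 1)
    (s : D) (i₀ : ι) (hi₀ : i₀ ∈ G s)
    (hz : yhat i₀ ≠ 0) (hhalf : yhat i₀ ≠ 1/2) (hone : yhat i₀ ≠ 1) :
    ∃ d : ι → ℝ, d i₀ ≠ 0 ∧ (∀ i, d i ≠ 0 → i ∈ G s) ∧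
      (∀ i, d i ≠ 0 → 0 < yhat i) ∧
      (∀ j, (∑ i ∈ F' j, d i = 0) ∨ (1/2 : ℝ) < ∑ i ∈ F' j, yhat i) ∧
      (∀ j, (∑ i ∈ G j, d i = 0) ∨ ∑ i ∈ G j, yhat i < 1) := by
  have hy₀ : 0 < yhat i₀ := (hpos i₀).lt_of_ne (Ne.symm hz)
  have hFs := (hcl s).1
  have hGs := (hcl s).2
  rcases eq_or_lt_of_le hFs with hFt | hFsl
  · -- F' s tight : 1/2 = ∑
    by_cases hmem : i₀ ∈ F' s
    · have hle : yhat i₀ ≤ ∑ i ∈ F' s, yhat i :=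
        Finset.single_le_sum (fun i _ => hpos i) hmem
      rw [← hFt] at hle
      have hlt : yhat i₀ < 1/2 := lt_of_le_of_ne hle hhalf
      have hsub : {i₀} ⊆ F' s := Finset.singleton_subset_iff.mpr hmem
      have hsum : 0 < ∑ i ∈ F' s \ {i₀}, yhat i := by
        rw [Finset.sum_sdiff_eq_sub hsub, ← hFt, Finset.sum_singleton]
        linarith
      obtain ⟨i₁, hi₁, hyi₁⟩ := exists_pos_of_sum_pos _ _ hsum
      rw [Finset.mem_sdiff, Finset.mem_singleton] at hi₁
      have H := dir_pair F' G hFG hdisj yhat s i₀ i₁ hi₀ (hFG s hi₁.1) (Ne.symm hi₁.2)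
        hy₀ hyi₁ (Or.inl ⟨fun _ => hi₁.1, fun _ => hmem⟩)
      obtain ⟨d, h1, -, h3, h4, h5, h6⟩ := H
      exact ⟨d, h1, h3, h4, h5, h6⟩
    · rcases lt_or_eq_of_le hGs with hGsl | hGt
      · obtain ⟨d, h1, -, h3, h4, h5, h6⟩ :=
          dir_single F' G hFG hdisj yhat s i₀ hi₀ hy₀ hGsl (fun h => absurd h hmem)
        exact ⟨d, h1, h3, h4, h5, h6⟩
      · have hsd : ∑ i ∈ G s \ F' s, yhat i = 1/2 := by
          rw [Finset.sum_sdiff_eq_sub (hFG s), hGt, ← hFt]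
          norm_num
        have hmemsd : i₀ ∈ G s \ F' s := Finset.mem_sdiff.mpr ⟨hi₀, hmem⟩
        have hle : yhat i₀ ≤ 1/2 := by
          have := Finset.single_le_sum (fun (i : ι) (_ : i ∈ G s \ F' s) => hpos i) hmemsd
          rwa [hsd] at this
        have hlt : yhat i₀ < 1/2 := lt_of_le_of_ne hle hhalf
        have hsub : {i₀} ⊆ G s \ F' s := Finset.singleton_subset_iff.mpr hmemsd
        have hsum : 0 < ∑ i ∈ (G s \ F' s) \ {i₀}, yhat i := by
          rw [Finset.sum_sdiff_eq_sub hsub, hsd, Finset.sum_singleton]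
          linarith
        obtain ⟨i₁, hi₁, hyi₁⟩ := exists_pos_of_sum_pos _ _ hsum
        rw [Finset.mem_sdiff, Finset.mem_singleton, Finset.mem_sdiff] at hi₁
        have H := dir_pair F' G hFG hdisj yhat s i₀ i₁ hi₀ hi₁.1.1 (Ne.symm hi₁.2)
          hy₀ hyi₁ (Or.inl ⟨fun h => absurd h hmem, fun h => absurd h hi₁.1.2⟩)
        obtain ⟨d, h1, -, h3, h4, h5, h6⟩ := H
        exact ⟨d, h1, h3, h4, h5, h6⟩
  · rcases lt_or_eq_of_le hGs with hGsl | hGt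
    · obtain ⟨d, h1, -, h3, h4, h5, h6⟩ :=
        dir_single F' G hFG hdisj yhat s i₀ hi₀ hy₀ hGsl (fun _ => hFsl)
      exact ⟨d, h1, h3, h4, h5, h6⟩
    · have hle : yhat i₀ ≤ 1 := by
        have := Finset.single_le_sum (fun (i : ι) (_ : i ∈ G s) => hpos i) hi₀
        rwa [hGt] at this
      have hlt : yhat i₀ < 1 := lt_of_le_of_ne hle hone
      have hsub : {i₀} ⊆ G s := Finset.singleton_subset_iff.mpr hi₀
      have hsum : 0 < ∑ i ∈ G s \ {i₀}, yhat i := by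
        rw [Finset.sum_sdiff_eq_sub hsub, hGt, Finset.sum_singleton]
        linarith
      obtain ⟨i₁, hi₁, hyi₁⟩ := exists_pos_of_sum_pos _ _ hsum
      rw [Finset.mem_sdiff, Finset.mem_singleton] at hi₁
      have H := dir_pair F' G hFG hdisj yhat s i₀ i₁ hi₀ hi₁.1 (Ne.symm hi₁.2)
        hy₀ hyi₁ (Or.inr hFsl)
      obtain ⟨d, h1, -, h3, h4, h5, h6⟩ := H
      exact ⟨d, h1, h3, h4, h5, h6⟩
/-- Lemma C.1: an extreme point of the knapsack-median polytope `𝒦` has at most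
one "special" cluster containing non-half-integral coordinates; and in the
strictly fractional case the special cluster has exactly one positive
coordinate in `F'_s`. -/
theorem knapsack_polytope_extreme_point_structure
    {ι D : Type*} [Fintype ι] [Fintype D]
    (F' G : D → Finset ι)
    (hFG : ∀ j, F' j ⊆ G j)
    (hdisj : ∀ j k, j ≠ k → Disjoint (G j) (G k))
    (hcover : ∀ i : ι, ∃ j, i ∈ G j)
    (w : ι → ℝ) (B : ℝ)
    (K : Set (ι → ℝ))
    (hK : K = {v | (∀ i, 0 ≤ v i) ∧
      (∀ j, (1/2 : ℝ) ≤ ∑ i ∈ F' j, v i ∧ ∑ i ∈ G j, v i ≤ 1) ∧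
      (∑ i, w i * v i ≤ B)}) :
    ∀ yhat ∈ K.extremePoints ℝ,
      (∀ s s' : D,
        (∃ i ∈ G s, yhat i ∉ ({0, 1/2, 1} : Set ℝ)) →
        (∃ i ∈ G s', yhat i ∉ ({0, 1/2, 1} : Set ℝ)) → s = s') ∧
      (∀ s : D, (∃ i ∈ G s, yhat i ∉ ({0, 1/2, 1} : Set ℝ)) →
        (1/2 : ℝ) < ∑ i ∈ G s, yhat i → ∑ i ∈ G s, yhat i < 1 →
        ∃! i, i ∈ F' s ∧ 0 < yhat i) := by
  intro yhat hy
  have hyK := hy.1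
  rw [hK] at hyK
  obtain ⟨hpos, hcl, hknap⟩ := hyK
  constructor
  · rintro s s' ⟨i₁, hi₁, hf₁⟩ ⟨i₂, hi₂, hf₂⟩
    by_contra hne
    simp only [Set.mem_insert_iff, Set.mem_singleton_iff, not_or] at hf₁ hf₂
    obtain ⟨d, hd₀, hdsupp, hP0, hPF, hPG⟩ :=
      dir_exists F' G hFG hdisj yhat hpos hcl s i₁ hi₁ hf₁.1 hf₁.2.1 hf₁.2.2
    obtain ⟨d', hd'₀, hd'supp, hP0', hPF', hPG'⟩ :=
      dir_exists F' G hFG hdisj yhat hpos hcl s' i₂ hi₂ hf₂.1 hf₂.2.1 hf₂.2.2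
    have hd'i₁ : d' i₁ = 0 := by
      by_contra h
      exact Finset.disjoint_left.mp (hdisj s s' hne) hi₁ (hd'supp i₁ h)
    exact two_dir F' G w B K hK yhat hy d d' hP0 hPF hPG hP0' hPF' hPG' i₁ hd₀ hd'i₁
      (fun h => hd'₀ (by rw [h]; rfl))
  · intro s _hspec hlo hhi
    have hFs := (hcl s).1
    obtain ⟨i₁, hi₁, hy₁⟩ := exists_pos_of_sum_pos (F' s) yhat (by linarith)
    refine ⟨i₁, ⟨hi₁, hy₁⟩, ?_⟩
    rintro i₂ ⟨hi₂, hy₂⟩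
    by_contra hne
    obtain ⟨d, hd₀, -, -, hP0, hPF, hPG⟩ :=
      dir_pair F' G hFG hdisj yhat s i₂ i₁ (hFG s hi₂) (hFG s hi₁) hne hy₂ hy₁
        (Or.inl ⟨fun _ => hi₁, fun _ => hi₂⟩)
    rcases eq_or_lt_of_le hFs with hFt | hFsl
    · -- F' s tight: find i₃ ∈ G s \ F' s with positive value
      have hsd : 0 < ∑ i ∈ G s \ F' s, yhat i := by
        rw [Finset.sum_sdiff_eq_sub (hFG s), ← hFt]
        linarith
      obtain ⟨i₃, hi₃, hy₃⟩ := exists_pos_of_sum_pos _ _ hsd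
      rw [Finset.mem_sdiff] at hi₃
      obtain ⟨d', hd'₀, hd'zero, -, hP0', hPF', hPG'⟩ :=
        dir_single F' G hFG hdisj yhat s i₃ hi₃.1 hy₃ hhi (fun h => absurd h hi₃.2)
      have hd'i₂ : d' i₂ = 0 := hd'zero i₂ (fun h => hi₃.2 (h ▸ hi₂))
      exact two_dir F' G w B K hK yhat hy d d' hP0 hPF hPG hP0' hPF' hPG' i₂ hd₀ hd'i₂
        (fun h => hd'₀ (by rw [h]; rfl))
    · obtain ⟨d', hd'₀, hd'zero, -, hP0', hPF', hPG'⟩ :=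
        dir_single F' G hFG hdisj yhat s i₁ (hFG s hi₁) hy₁ hhi (fun _ => hFsl)
      have hd'i₂ : d' i₂ = 0 := hd'zero i₂ hne
      exact two_dir F' G w B K hK yhat hy d d' hP0 hPF hPG hP0' hPF' hPG' i₂ hd₀ hd'i₂
        (fun h => hd'₀ (by rw [h]; rfl))
end
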